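/- arXiv:2103.11572 — 9 statements merged into one kernel-verified Lean document; each statement's English description precedes it below -/
import Mathlib

section
/- Let A and B be symmetric real n×n matrices and r ≥ 2 an integer, and suppose N_r = I_r ⊗ (A − B) + J_r ⊗ B is positive definite, where J_r denotes the r×r all-ones matrix and ⊗ the Kronecker product. Then: (i) A − B is positive definite; (ii) A + ℓ·B is positive definite for every ℓ = 1, 2, …, r−1; and (iii) A − ℓ·B·(A + (ℓ−1)·B)⁻¹·B is positive definite for every ℓ = 1, 2, …, r−1 (the inverse existing by (ii)). -/
open Matrix
open scoped Kronecker

/-- The `r × r` all-ones matrix over `ℝ`. -/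
def allOnes (r : ℕ) : Matrix (Fin r) (Fin r) ℝ := Matrix.of fun _ _ => 1

lemma h1 {r n : ℕ} (C : Matrix (Fin n) (Fin n) ℝ) (z : Fin r × Fin n → ℝ) (i : Fin r) (k : Fin n) :
    (((1 : Matrix (Fin r) (Fin r) ℝ) ⊗ₖ C) *ᵥ z) (i, k) = (C *ᵥ fun l => z (i, l)) k := by
  simp only [mulVec, dotProduct, Fintype.sum_prod_type, Matrix.kroneckerMap_apply,
    Matrix.one_apply, ite_mul, one_mul, zero_mul]
  rw [Finset.sum_comm]
  simp

lemma h2 {r n : ℕ} (B : Matrix (Fin n) (Fin n) ℝ) (z : Fin r × Fin n → ℝ) (i : Fin r) (k : Fin n) :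
    ((allOnes r ⊗ₖ B) *ᵥ z) (i, k) = (B *ᵥ fun l => ∑ j, z (j, l)) k := by
  simp only [mulVec, dotProduct, Fintype.sum_prod_type, Matrix.kroneckerMap_apply,
    allOnes, Matrix.of_apply, one_mul, Finset.mul_sum]
  rw [Finset.sum_comm]

lemma quadform {r n : ℕ} (C B : Matrix (Fin n) (Fin n) ℝ) (w : Fin r → Fin n → ℝ) :
    (fun p : Fin r × Fin n => w p.1 p.2) ⬝ᵥ
      ((((1 : Matrix (Fin r) (Fin r) ℝ) ⊗ₖ C + allOnes r ⊗ₖ B)) *ᵥ fun p => w p.1 p.2)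
    = (∑ i, w i ⬝ᵥ C *ᵥ w i) + (∑ i, w i) ⬝ᵥ B *ᵥ (∑ i, w i) := by
  rw [add_mulVec, dotProduct_add]
  congr 1
  · simp only [dotProduct, Fintype.sum_prod_type]
    refine Finset.sum_congr rfl fun i _ => Finset.sum_congr rfl fun k _ => ?_
    rw [h1]
  · simp only [dotProduct, Fintype.sum_prod_type]
    rw [Finset.sum_comm]
    refine Finset.sum_congr rfl fun k _ => ?_
    simp only [h2]
    rw [← Finset.sum_mul]
    congr 1
    · exact (Finset.sum_apply _ _ _).symm
    · congr 1
      funext l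
      simp [Finset.sum_apply]

lemma quadform' {r n : ℕ} (C B : Matrix (Fin n) (Fin n) ℝ) (c d : Fin r → ℝ)
    (x y : Fin n → ℝ) :
    (fun p : Fin r × Fin n => c p.1 * x p.2 + d p.1 * y p.2) ⬝ᵥ
      ((((1 : Matrix (Fin r) (Fin r) ℝ) ⊗ₖ C + allOnes r ⊗ₖ B)) *ᵥ
        fun p => c p.1 * x p.2 + d p.1 * y p.2)
    = (∑ i, c i * c i) * (x ⬝ᵥ C *ᵥ x) + (∑ i, c i * d i) * (x ⬝ᵥ C *ᵥ y + y ⬝ᵥ C *ᵥ x)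
      + (∑ i, d i * d i) * (y ⬝ᵥ C *ᵥ y)
      + ((∑ i, c i) • x + (∑ i, d i) • y) ⬝ᵥ B *ᵥ ((∑ i, c i) • x + (∑ i, d i) • y) := by
  have h := quadform C B (fun i => c i • x + d i • y)
  simp only [Pi.add_apply, Pi.smul_apply, smul_eq_mul] at h
  rw [h]
  have e : ∀ i : Fin r, (c i • x + d i • y) ⬝ᵥ C *ᵥ (c i • x + d i • y)
      = c i * c i * (x ⬝ᵥ C *ᵥ x) + c i * d i * (x ⬝ᵥ C *ᵥ y + y ⬝ᵥ C *ᵥ x)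
        + d i * d i * (y ⬝ᵥ C *ᵥ y) := by
    intro i
    simp only [mulVec_add, mulVec_smul, add_dotProduct, dotProduct_add, smul_dotProduct,
      dotProduct_smul, smul_eq_mul]
    ring
  have e2 : (∑ i : Fin r, (c i • x + d i • y)) = (∑ i, c i) • x + (∑ i, d i) • y := by
    rw [Finset.sum_add_distrib, ← Finset.sum_smul, ← Finset.sum_smul]
  simp only [e, e2, Finset.sum_add_distrib, ← Finset.sum_mul]

lemma card_filter_le {r m : ℕ} (hm : m ≤ r) :
    (Finset.univ.filter fun i : Fin r => i.val < m).card = m := by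
  have h : (Finset.univ.filter fun i : Fin r => i.val < m)
      = Finset.map ⟨fun j : Fin m => ⟨j.val, lt_of_lt_of_le j.isLt hm⟩,
          by intro a b hab; simpa [Fin.ext_iff] using hab⟩ Finset.univ := by
    ext i
    simp only [Finset.mem_filter, Finset.mem_univ, true_and, Finset.mem_map,
      Function.Embedding.coeFn_mk]
    constructor
    · intro hi; exact ⟨⟨i.val, hi⟩, rfl⟩
    · rintro ⟨j, rfl⟩; exact j.isLt
  rw [h, Finset.card_map, Finset.card_univ, Fintype.card_fin]

lemma card_filter_between {r a b : ℕ} (hb : b ≤ r) (hab : a ≤ b) :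
    (Finset.univ.filter fun i : Fin r => a ≤ i.val ∧ i.val < b).card = b - a := by
  have h : (Finset.univ.filter fun i : Fin r => a ≤ i.val ∧ i.val < b)
      = (Finset.univ.filter fun i : Fin r => i.val < b)
        \ (Finset.univ.filter fun i : Fin r => i.val < a) := by
    ext i; simp; omega
  rw [h, Finset.card_sdiff_of_subset (by intro i; simp; omega), card_filter_le hb,
    card_filter_le (le_trans hab hb)]

lemma sum_ind {r : ℕ} (p : Fin r → Prop) [DecidablePred p] :
    (∑ i, (if p i then (1:ℝ) else 0)) = (Finset.univ.filter p).card := by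
  simp [Finset.sum_boole]

lemma symm_to_herm {n : ℕ} {M : Matrix (Fin n) (Fin n) ℝ} (h : M.IsSymm) : M.IsHermitian := by
  rw [Matrix.IsHermitian, Matrix.conjTranspose_eq_transpose_of_trivial]; exact h

theorem stmt_5 {n : ℕ} (r : ℕ) (hr : 2 ≤ r) (A B : Matrix (Fin n) (Fin n) ℝ)
    (hA : A.IsSymm) (hB : B.IsSymm)
    (hN : ((1 : Matrix (Fin r) (Fin r) ℝ) ⊗ₖ (A - B) + allOnes r ⊗ₖ B).PosDef) :
    (A - B).PosDef
    ∧ (∀ l : ℕ, 1 ≤ l → l ≤ r - 1 → (A + (l : ℝ) • B).PosDef)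
    ∧ (∀ l : ℕ, 1 ≤ l → l ≤ r - 1 →
        (A - (l : ℝ) • (B * (A + ((l : ℝ) - 1) • B)⁻¹ * B)).PosDef) := by
  classical
  have hCs : (A - B).IsSymm := by
    rw [Matrix.IsSymm, Matrix.transpose_sub, hA.eq, hB.eq]
  -- posA : A + l • B is PosDef for all l with l + 1 ≤ r (including l = 0)
  have posA : ∀ l : ℕ, l + 1 ≤ r → (A + (l : ℝ) • B).PosDef := by
    intro l hl
    refine Matrix.PosDef.of_dotProduct_mulVec_pos (symm_to_herm (by
      rw [Matrix.IsSymm, Matrix.transpose_add, Matrix.transpose_smul, hA.eq, hB.eq]))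
      fun x hx => ?_
    set c : Fin r → ℝ := fun i => if i.val < l + 1 then 1 else 0 with hc
    set d : Fin r → ℝ := fun _ => 0 with hd
    have hz : (fun p : Fin r × Fin n => c p.1 * x p.2 + d p.1 * x p.2) ≠ 0 := by
      intro h0
      apply hx
      funext k
      have h := congrFun h0 (⟨0, by omega⟩, k)
      simpa [hc, hd] using h
    have hp := hN.dotProduct_mulVec_pos hz
    rw [star_trivial, quadform'] at hp
    have s1 : (∑ i, c i * c i) = ((l : ℝ) + 1) := by
      have e : ∀ i : Fin r, c i * c i = if i.val < l + 1 then (1:ℝ) else 0 := by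
        intro i; simp only [hc]; split_ifs <;> ring
      rw [Finset.sum_congr rfl fun i _ => e i, sum_ind, card_filter_le hl]
      push_cast; ring
    have s2 : (∑ i, c i) = ((l : ℝ) + 1) := by
      rw [hc, sum_ind, card_filter_le hl]; push_cast; ring
    have s3 : (∑ i, c i * d i) = 0 := by simp [hd]
    have s4 : (∑ i, d i * d i) = 0 := by simp [hd]
    have s5 : (∑ i, d i) = 0 := by simp [hd]
    rw [s1, s3, s4, s5, s2] at hp
    simp only [zero_mul, add_zero, zero_smul, mul_zero] at hp
    have hB2 : (((l:ℝ) + 1) • x) ⬝ᵥ B *ᵥ (((l:ℝ) + 1) • x)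
        = ((l:ℝ) + 1) * ((l:ℝ) + 1) * (x ⬝ᵥ B *ᵥ x) := by
      rw [mulVec_smul, smul_dotProduct, dotProduct_smul]
      simp [smul_eq_mul]; ring
    rw [hB2] at hp
    have hxC : x ⬝ᵥ (A - B) *ᵥ x = x ⬝ᵥ A *ᵥ x - x ⬝ᵥ B *ᵥ x := by
      rw [sub_mulVec, dotProduct_sub]
    rw [hxC] at hp
    have htgt : star x ⬝ᵥ (A + (l:ℝ) • B) *ᵥ x
        = x ⬝ᵥ A *ᵥ x + (l:ℝ) * (x ⬝ᵥ B *ᵥ x) := by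
      rw [star_trivial, add_mulVec, dotProduct_add, smul_mulVec, dotProduct_smul]
      simp [smul_eq_mul]
    rw [htgt]
    have hl1 : (0:ℝ) < (l:ℝ) + 1 := by positivity
    nlinarith [hp, hl1]
  refine ⟨?_, fun l h1 h2 => posA l (by omega), ?_⟩
  · -- part (i)
    refine Matrix.PosDef.of_dotProduct_mulVec_pos (symm_to_herm hCs) fun x hx => ?_
    set c : Fin r → ℝ := fun i => if i.val < 1 then 1 else 0 with hc
    set d : Fin r → ℝ := fun i => if 1 ≤ i.val ∧ i.val < 2 then 1 else 0 with hd
    have hz : (fun p : Fin r × Fin n => c p.1 * x p.2 + d p.1 * (-x) p.2) ≠ 0 := by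
      intro h0
      apply hx
      funext k
      have h := congrFun h0 (⟨0, by omega⟩, k)
      simpa [hc, hd] using h
    have hp := hN.dotProduct_mulVec_pos hz
    rw [star_trivial, quadform'] at hp
    have s1 : (∑ i, c i * c i) = (1:ℝ) := by
      have e : ∀ i : Fin r, c i * c i = if i.val < 1 then (1:ℝ) else 0 := by
        intro i; simp only [hc]; split_ifs <;> ring
      rw [Finset.sum_congr rfl fun i _ => e i, sum_ind, card_filter_le (by omega)]
      norm_num
    have s2 : (∑ i, c i) = (1:ℝ) := by
      rw [hc, sum_ind, card_filter_le (by omega)]; norm_num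
    have s3 : (∑ i, c i * d i) = 0 := by
      have e : ∀ i : Fin r, c i * d i = 0 := by
        intro i; simp only [hc, hd]; split_ifs with h1 h2 <;> try ring
        exact absurd h2.1 (by omega)
      rw [Finset.sum_congr rfl fun i _ => e i]; simp
    have s4 : (∑ i, d i * d i) = (1:ℝ) := by
      have e : ∀ i : Fin r, d i * d i = if 1 ≤ i.val ∧ i.val < 2 then (1:ℝ) else 0 := by
        intro i; simp only [hd]; split_ifs <;> ring
      rw [Finset.sum_congr rfl fun i _ => e i, sum_ind, card_filter_between hr (by omega)]
      norm_num
    have s5 : (∑ i, d i) = (1:ℝ) := by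
      rw [hd, sum_ind, card_filter_between hr (by omega)]; norm_num
    rw [s1, s2, s3, s4, s5] at hp
    have hneg : (-x) ⬝ᵥ (A - B) *ᵥ (-x) = x ⬝ᵥ (A - B) *ᵥ x := by
      rw [mulVec_neg, neg_dotProduct, dotProduct_neg, neg_neg]
    have hzero : ((1:ℝ) • x + (1:ℝ) • (-x)) = (0 : Fin n → ℝ) := by
      funext k; simp
    rw [hneg, hzero] at hp
    simp only [zero_dotProduct, dotProduct_zero, one_mul, zero_mul, add_zero] at hp
    rw [star_trivial]
    linarith [hp]
  · -- part (iii)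
    intro l hl1 hl2
    have hlr : l + 1 ≤ r := by omega
    have hM : (A + ((l:ℝ) - 1) • B).PosDef := by
      have h := posA (l - 1) (by omega)
      have hcast : ((l - 1 : ℕ) : ℝ) = (l:ℝ) - 1 := by
        rw [Nat.cast_sub hl1]; norm_num
      rwa [hcast] at h
    set M := A + ((l:ℝ) - 1) • B with hMdef
    have hMs : M.IsSymm := by
      rw [Matrix.IsSymm, hMdef, Matrix.transpose_add, Matrix.transpose_smul, hA.eq, hB.eq]
    have hdet : IsUnit M.det := isUnit_iff_ne_zero.mpr (ne_of_gt hM.det_pos)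
    have hMinv : M * M⁻¹ = 1 := Matrix.mul_nonsing_inv M hdet
    have hts : (A - (l:ℝ) • (B * M⁻¹ * B)).IsSymm := by
      rw [Matrix.IsSymm, Matrix.transpose_sub, Matrix.transpose_smul, Matrix.transpose_mul,
        Matrix.transpose_mul, Matrix.transpose_nonsing_inv, hA.eq, hB.eq, hMs.eq,
        Matrix.mul_assoc]
    refine Matrix.PosDef.of_dotProduct_mulVec_pos (symm_to_herm hts) fun x hx => ?_
    set y : Fin n → ℝ := -(M⁻¹ *ᵥ (B *ᵥ x)) with hy
    set c : Fin r → ℝ := fun i => if i.val < 1 then 1 else 0 with hc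
    set d : Fin r → ℝ := fun i => if 1 ≤ i.val ∧ i.val < l + 1 then 1 else 0 with hd
    have hz : (fun p : Fin r × Fin n => c p.1 * x p.2 + d p.1 * y p.2) ≠ 0 := by
      intro h0
      apply hx
      funext k
      have h := congrFun h0 (⟨0, by omega⟩, k)
      simpa [hc, hd] using h
    have hp := hN.dotProduct_mulVec_pos hz
    rw [star_trivial, quadform'] at hp
    have s1 : (∑ i, c i * c i) = (1:ℝ) := by
      have e : ∀ i : Fin r, c i * c i = if i.val < 1 then (1:ℝ) else 0 := by
        intro i; simp only [hc]; split_ifs <;> ring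
      rw [Finset.sum_congr rfl fun i _ => e i, sum_ind, card_filter_le (by omega)]
      norm_num
    have s2 : (∑ i, c i) = (1:ℝ) := by
      rw [hc, sum_ind, card_filter_le (by omega)]; norm_num
    have s3 : (∑ i, c i * d i) = 0 := by
      have e : ∀ i : Fin r, c i * d i = 0 := by
        intro i; simp only [hc, hd]; split_ifs with h1 h2 <;> try ring
        exact absurd h2.1 (by omega)
      rw [Finset.sum_congr rfl fun i _ => e i]; simp
    have s4 : (∑ i, d i * d i) = (l:ℝ) := by
      have e : ∀ i : Fin r, d i * d i = if 1 ≤ i.val ∧ i.val < l + 1 then (1:ℝ) else 0 := by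
        intro i; simp only [hd]; split_ifs <;> ring
      rw [Finset.sum_congr rfl fun i _ => e i, sum_ind, card_filter_between hlr (by omega)]
      push_cast [Nat.add_sub_cancel]; ring
    have s5 : (∑ i, d i) = (l:ℝ) := by
      rw [hd, sum_ind, card_filter_between hlr (by omega)]
      push_cast [Nat.add_sub_cancel]; ring
    rw [s1, s2, s3, s4, s5] at hp
    have EB : ((1:ℝ) • x + (l:ℝ) • y) ⬝ᵥ B *ᵥ ((1:ℝ) • x + (l:ℝ) • y)
        = x ⬝ᵥ B *ᵥ x + (l:ℝ) * (x ⬝ᵥ B *ᵥ y) + (l:ℝ) * (y ⬝ᵥ B *ᵥ x)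
          + (l:ℝ) * (l:ℝ) * (y ⬝ᵥ B *ᵥ y) := by
      rw [mulVec_add, mulVec_smul, mulVec_smul, add_dotProduct, smul_dotProduct,
        smul_dotProduct, dotProduct_add, dotProduct_add, dotProduct_smul, dotProduct_smul,
        dotProduct_smul, dotProduct_smul]
      simp [smul_eq_mul]; ring
    rw [EB] at hp
    have hCx : x ⬝ᵥ (A - B) *ᵥ x = x ⬝ᵥ A *ᵥ x - x ⬝ᵥ B *ᵥ x := by
      rw [sub_mulVec, dotProduct_sub]
    have hCy : y ⬝ᵥ (A - B) *ᵥ y = y ⬝ᵥ A *ᵥ y - y ⬝ᵥ B *ᵥ y := by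
      rw [sub_mulVec, dotProduct_sub]
    rw [hCx, hCy] at hp
    have hMy : M *ᵥ y = -(B *ᵥ x) := by
      rw [hy, mulVec_neg, mulVec_mulVec, hMinv, one_mulVec]
    have comb : y ⬝ᵥ A *ᵥ y + ((l:ℝ) - 1) * (y ⬝ᵥ B *ᵥ y) = -(y ⬝ᵥ B *ᵥ x) := by
      have h1 : y ⬝ᵥ M *ᵥ y = -(y ⬝ᵥ B *ᵥ x) := by rw [hMy, dotProduct_neg]
      have h2 : y ⬝ᵥ M *ᵥ y = y ⬝ᵥ A *ᵥ y + ((l:ℝ) - 1) * (y ⬝ᵥ B *ᵥ y) := by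
        rw [hMdef, add_mulVec, dotProduct_add, smul_mulVec, dotProduct_smul]
        simp [smul_eq_mul]
      rw [← h2, h1]
    have hBy : B *ᵥ y = -((B * M⁻¹ * B) *ᵥ x) := by
      rw [hy, mulVec_neg, mulVec_mulVec, mulVec_mulVec, Matrix.mul_assoc]
    have hxBy : x ⬝ᵥ B *ᵥ y = -(x ⬝ᵥ (B * M⁻¹ * B) *ᵥ x) := by
      rw [hBy, dotProduct_neg]
    rw [hxBy] at hp
    have htgt : star x ⬝ᵥ (A - (l:ℝ) • (B * M⁻¹ * B)) *ᵥ x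
        = x ⬝ᵥ A *ᵥ x - (l:ℝ) * (x ⬝ᵥ (B * M⁻¹ * B) *ᵥ x) := by
      rw [star_trivial, sub_mulVec, dotProduct_sub, smul_mulVec, dotProduct_smul]
      simp [smul_eq_mul]
    rw [htgt]
    have combl : (l:ℝ) * (y ⬝ᵥ A *ᵥ y + ((l:ℝ) - 1) * (y ⬝ᵥ B *ᵥ y))
        = (l:ℝ) * (-(y ⬝ᵥ B *ᵥ x)) := by rw [comb]
    nlinarith [hp, combl]
end

section
/- Let A and B be symmetric real n×n matrices and r ≥ 2 an integer such that A − B, A + (r−2)·B, A + (r−1)·B, and A − (r−1)·B·(A + (r−2)·B)⁻¹·B are all invertible. Set F = (A − (r−1)·B·(A + (r−2)·B)⁻¹·B)⁻¹ and G = (A + (r−1)·B)⁻¹·B·(A − B)⁻¹. Then the matrix N_r = I_r ⊗ (A − B) + J_r ⊗ B is invertible and N_r⁻¹ = I_r ⊗ (F + G) − J_r ⊗ G, where J_r denotes the r×r all-ones matrix and ⊗ the Kronecker product. -/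
set_option maxHeartbeats 1000000


open Matrix
open scoped Kronecker

lemma allOnes_mul_allOnes (r : ℕ) :
    allOnes r * allOnes r = (r : ℝ) • allOnes r := by
  ext i j
  simp [allOnes, Matrix.mul_apply]

theorem stmt_6 {n : ℕ} (r : ℕ) (hr : 2 ≤ r) (A B : Matrix (Fin n) (Fin n) ℝ)
    (hA : A.IsSymm) (hB : B.IsSymm)
    (h1 : IsUnit (A - B).det)
    (h2 : IsUnit (A + ((r : ℝ) - 2) • B).det)
    (h3 : IsUnit (A + ((r : ℝ) - 1) • B).det)
    (h4 : IsUnit (A - ((r : ℝ) - 1) • (B * (A + ((r : ℝ) - 2) • B)⁻¹ * B)).det) :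
    IsUnit ((1 : Matrix (Fin r) (Fin r) ℝ) ⊗ₖ (A - B) + allOnes r ⊗ₖ B).det
    ∧ ((1 : Matrix (Fin r) (Fin r) ℝ) ⊗ₖ (A - B) + allOnes r ⊗ₖ B)⁻¹
        = (1 : Matrix (Fin r) (Fin r) ℝ) ⊗ₖ
            ((A - ((r : ℝ) - 1) • (B * (A + ((r : ℝ) - 2) • B)⁻¹ * B))⁻¹
              + (A + ((r : ℝ) - 1) • B)⁻¹ * B * (A - B)⁻¹)
          - allOnes r ⊗ₖ ((A + ((r : ℝ) - 1) • B)⁻¹ * B * (A - B)⁻¹) := by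
  set C : Matrix (Fin n) (Fin n) ℝ := A + ((r:ℝ) - 2) • B with hC
  set D : Matrix (Fin n) (Fin n) ℝ := A + ((r:ℝ) - 1) • B with hD
  set E : Matrix (Fin n) (Fin n) ℝ := A - B with hE
  have hCC : C * C⁻¹ = 1 := Matrix.mul_nonsing_inv _ h2
  have hC'C : C⁻¹ * C = 1 := Matrix.nonsing_inv_mul _ h2
  have hDD : D * D⁻¹ = 1 := Matrix.mul_nonsing_inv _ h3
  have hEE : E * E⁻¹ = 1 := Matrix.mul_nonsing_inv _ h1
  -- key factorization
  have key : E * C⁻¹ * D = A - ((r:ℝ) - 1) • (B * C⁻¹ * B) := by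
    have e0 : E = C - ((r:ℝ) - 1) • B := by rw [hE, hC]; module
    have e1 : E * C⁻¹ = 1 - ((r:ℝ) - 1) • (B * C⁻¹) := by
      rw [e0, sub_mul, smul_mul_assoc, hCC]
    have e3 : C⁻¹ * D = 1 + C⁻¹ * B := by
      have : D = C + B := by rw [hD, hC]; module
      rw [this, Matrix.mul_add, hC'C]
    have e4 : B * C⁻¹ * D = B + B * C⁻¹ * B := by
      rw [Matrix.mul_assoc, e3, Matrix.mul_add, Matrix.mul_one, Matrix.mul_assoc]
    rw [e1, sub_mul, one_mul, smul_mul_assoc, e4, hD]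
    module
  have hFinv : (A - ((r:ℝ) - 1) • (B * C⁻¹ * B))⁻¹ = D⁻¹ * C * E⁻¹ := by
    rw [← key, Matrix.mul_inv_rev, Matrix.mul_inv_rev,
      Matrix.nonsing_inv_nonsing_inv _ h2, ← Matrix.mul_assoc]
  set G : Matrix (Fin n) (Fin n) ℝ := D⁻¹ * B * E⁻¹ with hG
  have hFG : (A - ((r:ℝ) - 1) • (B * C⁻¹ * B))⁻¹ + G = E⁻¹ := by
    rw [hFinv, hG, Matrix.mul_assoc, Matrix.mul_assoc, ← Matrix.mul_add,
      ← Matrix.add_mul]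
    have : C + B = D := by rw [hD, hC]; module
    rw [this, ← Matrix.mul_assoc, Matrix.nonsing_inv_mul _ h3, Matrix.one_mul]
  -- the candidate inverse
  set N := (1 : Matrix (Fin r) (Fin r) ℝ) ⊗ₖ E + allOnes r ⊗ₖ B with hN
  set M := (1 : Matrix (Fin r) (Fin r) ℝ) ⊗ₖ E⁻¹ - allOnes r ⊗ₖ G with hM
  have hDG : D * G = B * E⁻¹ := by
    rw [hG, ← Matrix.mul_assoc, ← Matrix.mul_assoc, hDD, Matrix.one_mul]
  have hNM : N * M = 1 := by
    rw [hN, hM, Matrix.add_mul, Matrix.mul_sub, Matrix.mul_sub,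
      ← Matrix.mul_kronecker_mul, ← Matrix.mul_kronecker_mul,
      ← Matrix.mul_kronecker_mul, ← Matrix.mul_kronecker_mul,
      hEE, allOnes_mul_allOnes, Matrix.smul_kronecker,
      ← Matrix.kronecker_smul]
    simp only [Matrix.one_mul, Matrix.mul_one]
    have hcoef : B * E⁻¹ = E * G + (r:ℝ) • (B * G) := by
      rw [← smul_mul_assoc, ← hDG, ← Matrix.add_mul]
      congr 1
      rw [hD, hE]; module
    rw [hcoef, Matrix.kronecker_add, Matrix.one_kronecker_one]
    abel
  have hdet : IsUnit N.det := by
    have : N.det * M.det = 1 := by rw [← Matrix.det_mul, hNM, Matrix.det_one]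
    exact IsUnit.of_mul_eq_one _ this
  refine ⟨hdet, ?_⟩
  have hNinv : N⁻¹ = M := Matrix.inv_eq_right_inv hNM
  rw [hNinv, hM, ← hFG]
end

section
/- Let A and B be symmetric real n×n matrices and r ≥ 2 an integer such that A − B, A + (r−2)·B, A + (r−1)·B, and A − (r−1)·B·(A + (r−2)·B)⁻¹·B are all invertible. Set F = (A − (r−1)·B·(A + (r−2)·B)⁻¹·B)⁻¹ and G = (A + (r−1)·B)⁻¹·B·(A − B)⁻¹. Then F + G = (A − B)⁻¹ and F − (r−1)·G = (A + (r−1)·B)⁻¹. -/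
open Matrix

theorem stmt_7 {n : ℕ} (r : ℕ) (hr : 2 ≤ r) (A B : Matrix (Fin n) (Fin n) ℝ)
    (hA : A.IsSymm) (hB : B.IsSymm)
    (h1 : IsUnit (A - B).det)
    (h2 : IsUnit (A + ((r : ℝ) - 2) • B).det)
    (h3 : IsUnit (A + ((r : ℝ) - 1) • B).det)
    (h4 : IsUnit (A - ((r : ℝ) - 1) • (B * (A + ((r : ℝ) - 2) • B)⁻¹ * B)).det)
    (F G : Matrix (Fin n) (Fin n) ℝ)
    (hF : F = (A - ((r : ℝ) - 1) • (B * (A + ((r : ℝ) - 2) • B)⁻¹ * B))⁻¹)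
    (hG : G = (A + ((r : ℝ) - 1) • B)⁻¹ * B * (A - B)⁻¹) :
    F + G = (A - B)⁻¹ ∧ F - ((r : ℝ) - 1) • G = (A + ((r : ℝ) - 1) • B)⁻¹ := by
  set s : ℝ := (r : ℝ) - 1 with hs
  set M : Matrix (Fin n) (Fin n) ℝ := A + ((r : ℝ) - 2) • B with hM
  have hMinv : M * M⁻¹ = 1 := Matrix.mul_nonsing_inv _ h2
  have hinvM : M⁻¹ * M = 1 := Matrix.nonsing_inv_mul _ h2
  have hAB : A - B = M - s • B := by rw [hM, hs]; module
  have hAs : A + s • B = M + B := by rw [hM, hs]; module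
  have key : (A - B) * M⁻¹ * (A + s • B) = A - s • (B * M⁻¹ * B) := by
    rw [hAB, hAs]
    have e : (M - s • B) * M⁻¹ * (M + B)
        = (M * M⁻¹) * (M + B) - s • (B * (M⁻¹ * M)) - s • (B * M⁻¹ * B) := by
      noncomm_ring
    rw [e, hMinv, hinvM, one_mul, mul_one]
    rw [hM, hs]
    module
  have hF' : F = (A + s • B)⁻¹ * M * (A - B)⁻¹ := by
    rw [hF, ← key, Matrix.mul_inv_rev, Matrix.mul_inv_rev,
      Matrix.nonsing_inv_nonsing_inv _ h2, mul_assoc]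
  have hG' : G = (A + s • B)⁻¹ * B * (A - B)⁻¹ := hG
  constructor
  · rw [hF', hG']
    have : (A + s • B)⁻¹ * M * (A - B)⁻¹ + (A + s • B)⁻¹ * B * (A - B)⁻¹
        = (A + s • B)⁻¹ * (M + B) * (A - B)⁻¹ := by noncomm_ring
    rw [this, ← hAs, Matrix.nonsing_inv_mul _ h3, one_mul]
  · rw [hF', hG']
    have : (A + s • B)⁻¹ * M * (A - B)⁻¹ - s • ((A + s • B)⁻¹ * B * (A - B)⁻¹)
        = (A + s • B)⁻¹ * (M - s • B) * (A - B)⁻¹ := by noncomm_ring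
    rw [this, ← hAB, mul_assoc, Matrix.mul_nonsing_inv _ h1, mul_one]
end

section
/- Let r ≥ 2 be an integer, let A and B be symmetric real n×n matrices, and let 𝐀 = I_r ⊗ (A − B) + J_r ⊗ B be Schur stable. Let 𝐐 be a symmetric positive definite rn×rn real matrix and let 𝐏 be a symmetric matrix satisfying the discrete Lyapunov equation 𝐏 = 𝐀ᵀ𝐏𝐀 + 𝐐. Then there exist symmetric n×n matrices P₁, P₂ with 𝐏 = I_r ⊗ (P₁ − P₂) + J_r ⊗ P₂ if and only if there exist symmetric n×n matrices Q₁, Q₂ with 𝐐 = I_r ⊗ (Q₁ − Q₂) + J_r ⊗ Q₂. -/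
open Matrix
open scoped Kronecker

/-- A real square matrix is Schur stable if all of its complex eigenvalues have
modulus strictly less than one. -/
def SchurStable {N : Type*} [Fintype N] [DecidableEq N] (M : Matrix N N ℝ) : Prop :=
  ∀ μ ∈ spectrum ℂ (M.map (algebraMap ℝ ℂ)), ‖μ‖ < 1

namespace Stmt9Aux

def SM (r : ℕ) {n : ℕ} (X Y : Matrix (Fin n) (Fin n) ℝ) :
    Matrix (Fin r × Fin n) (Fin r × Fin n) ℝ :=
  (1 : Matrix (Fin r) (Fin r) ℝ) ⊗ₖ X + allOnes r ⊗ₖ Y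

variable {r n : ℕ}

lemma SM_apply (X Y : Matrix (Fin n) (Fin n) ℝ) (p q : Fin r × Fin n) :
    SM r X Y p q = (if p.1 = q.1 then X p.2 q.2 else 0) + Y p.2 q.2 := by
  simp [SM, allOnes, Matrix.one_apply, ite_mul, Matrix.kroneckerMap_apply]

lemma allOnes_mul_allOnes : allOnes r * allOnes r = (r : ℝ) • allOnes r := by
  ext i j
  simp [allOnes, Matrix.mul_apply, Finset.sum_const]

lemma SM_mul (X Y Z W : Matrix (Fin n) (Fin n) ℝ) :
    SM r X Y * SM r Z W = SM r (X * Z) (X * W + Y * Z + (r : ℝ) • (Y * W)) := by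
  simp only [SM, add_mul, mul_add, ← Matrix.mul_kronecker_mul, Matrix.one_mul, Matrix.mul_one,
    allOnes_mul_allOnes, Matrix.smul_kronecker, Matrix.kronecker_add, Matrix.kronecker_smul]
  abel

lemma SM_sub (X Y Z W : Matrix (Fin n) (Fin n) ℝ) :
    SM r X Y - SM r Z W = SM r (X - Z) (Y - W) := by
  ext p q
  simp only [Matrix.sub_apply, SM_apply]
  by_cases h : p.1 = q.1 <;> simp [h] <;> ring

lemma SM_transpose (X Y : Matrix (Fin n) (Fin n) ℝ) :
    (SM r X Y)ᵀ = SM r Xᵀ Yᵀ := by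
  ext p q
  simp only [Matrix.transpose_apply, SM_apply]
  by_cases h : p.1 = q.1 <;> simp [h, eq_comm]

lemma extract (hr : 2 ≤ r) {M : Matrix (Fin r × Fin n) (Fin r × Fin n) ℝ}
    (hM : M.IsSymm) {X Y : Matrix (Fin n) (Fin n) ℝ} (h : M = SM r X Y) :
    X.IsSymm ∧ Y.IsSymm := by
  have h0 : (0 : ℕ) < r := by omega
  have h1 : (1 : ℕ) < r := by omega
  set i0 : Fin r := ⟨0, h0⟩ with hi0
  set i1 : Fin r := ⟨1, h1⟩ with hi1
  have hne : i0 ≠ i1 := by simp [hi0, hi1, Fin.ext_iff]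
  have key01 : ∀ a b, M (i0, a) (i1, b) = Y a b := by
    intro a b; rw [h, SM_apply]; simp [hne]
  have key10 : ∀ a b, M (i1, a) (i0, b) = Y a b := by
    intro a b; rw [h, SM_apply]; simp [hne.symm]
  have keyd : ∀ a b, M (i0, a) (i0, b) = X a b + Y a b := by
    intro a b; rw [h, SM_apply]; simp
  have hYsym : Y.IsSymm := by
    apply Matrix.IsSymm.ext
    intro a b
    rw [← key01 b a, ← key10 a b, hM.apply]
  refine ⟨?_, hYsym⟩
  apply Matrix.IsSymm.ext
  intro a b
  have e1 : X b a + Y b a = X a b + Y a b := by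
    rw [← keyd b a, ← keyd a b, hM.apply]
  have e2 : Y b a = Y a b := hYsym.apply a b
  linarith

lemma mem_spectrum_complex {N : Type*} [Fintype N] [DecidableEq N] {M : Matrix N N ℝ} {μ : ℝ}
    (h : μ ∈ spectrum ℝ M) : (μ : ℂ) ∈ spectrum ℂ (M.map (algebraMap ℝ ℂ)) := by
  rw [spectrum.mem_iff] at h ⊢
  intro hu
  apply h
  rw [Matrix.isUnit_iff_isUnit_det] at hu ⊢
  have heq : (algebraMap ℂ (Matrix N N ℂ)) (μ : ℂ) - M.map (algebraMap ℝ ℂ)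
      = ((algebraMap ℝ (Matrix N N ℝ)) μ - M).map (algebraMap ℝ ℂ) := by
    ext i j
    simp [Matrix.algebraMap_matrix_apply, Matrix.map_apply, Matrix.sub_apply, apply_ite]
  rw [heq, ← RingHom.mapMatrix_apply, ← RingHom.map_det] at hu
  have hne : ((algebraMap ℝ (Matrix N N ℝ)) μ - M).det ≠ 0 := by
    intro h0
    exact hu.ne_zero (by rw [h0]; simp)
  exact isUnit_iff_ne_zero.2 hne

lemma sym_fixed_zero {N : Type*} [Fintype N] [DecidableEq N] {M : Matrix N N ℝ}
    (hsym : M.IsSymm) (hstab : SchurStable M) {X : Matrix N N ℝ}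
    (hX : X = Mᵀ * X * M) : X = 0 := by
  have hM : M.IsHermitian := by
    rw [Matrix.IsHermitian, Matrix.conjTranspose_eq_transpose_of_trivial]; exact hsym
  have hXM : X = M * X * M := by
    calc X = Mᵀ * X * M := hX
    _ = M * X * M := by rw [hsym]
  set d := hM.eigenvalues with hd_def
  have hd : ∀ i, |d i| < 1 := by
    intro i
    have h1 := mem_spectrum_complex (hM.eigenvalues_mem_spectrum_real i)
    have h2 := hstab _ h1
    rwa [Complex.norm_real, Real.norm_eq_abs] at h2
  set U : Matrix N N ℝ := (hM.eigenvectorUnitary : Matrix N N ℝ) with hU_def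
  have hUU : U * star U = 1 := (Matrix.mem_unitaryGroup_iff).mp hM.eigenvectorUnitary.2
  have hUU' : star U * U = 1 := (Matrix.mem_unitaryGroup_iff').mp hM.eigenvectorUnitary.2
  have hdiag : star U * M * U = Matrix.diagonal d := by
    have h := (Unitary.conjStarAlgAut_star_apply (S := ℝ) _ _).symm.trans hM.conjStarAlgAut_star_eigenvectorUnitary
    have hco : (RCLike.ofReal ∘ hM.eigenvalues : N → ℝ) = hM.eigenvalues := by
      funext i; simp [RCLike.ofReal]
    rw [hco] at h
    exact h
  have hMU : M * U = U * Matrix.diagonal d := by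
    calc M * U = (U * star U) * M * U := by rw [hUU, Matrix.one_mul]
    _ = U * (star U * M * U) := by simp only [Matrix.mul_assoc]
    _ = U * Matrix.diagonal d := by rw [hdiag]
  have hUM : star U * M = Matrix.diagonal d * star U := by
    calc star U * M = star U * M * (U * star U) := by rw [hUU, Matrix.mul_one]
    _ = (star U * M * U) * star U := by simp only [Matrix.mul_assoc]
    _ = Matrix.diagonal d * star U := by rw [hdiag]
  set Y := star U * X * U with hY_def
  have hY : Y = Matrix.diagonal d * Y * Matrix.diagonal d := by
    calc Y = star U * (M * X * M) * U := by rw [hY_def, ← hXM]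
    _ = (star U * M) * X * (M * U) := by simp only [Matrix.mul_assoc]
    _ = (Matrix.diagonal d * star U) * X * (U * Matrix.diagonal d) := by rw [hUM, hMU]
    _ = Matrix.diagonal d * Y * Matrix.diagonal d := by
        simp only [hY_def, Matrix.mul_assoc]
  have hY0 : Y = 0 := by
    ext i j
    have h2 : Y i j = d i * Y i j * d j := by
      have := congrFun (congrFun hY i) j
      simpa [Matrix.diagonal_mul, Matrix.mul_diagonal] using this
    have hlt : d i * d j < 1 := by
      calc d i * d j ≤ |d i * d j| := le_abs_self _
      _ = |d i| * |d j| := abs_mul _ _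
      _ < 1 := by nlinarith [abs_nonneg (d i), abs_nonneg (d j), hd i, hd j]
    have h3 : Y i j * (1 - d i * d j) = 0 := by linear_combination h2
    have h4 : (1 - d i * d j) ≠ 0 := ne_of_gt (by linarith)
    have := mul_eq_zero.mp h3
    simpa [h4] using this
  have hXU : X = U * Y * star U := by
    rw [hY_def, ← Matrix.mul_assoc, ← Matrix.mul_assoc, hUU, Matrix.one_mul,
      Matrix.mul_assoc, hUU, Matrix.mul_one]
  rw [hXU, hY0, Matrix.mul_zero, Matrix.zero_mul]

lemma pack (hr : 2 ≤ r) {M : Matrix (Fin r × Fin n) (Fin r × Fin n) ℝ} (hM : M.IsSymm)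
    (h : ∃ X Y : Matrix (Fin n) (Fin n) ℝ, M = SM r X Y) :
    ∃ X Y : Matrix (Fin n) (Fin n) ℝ, X.IsSymm ∧ Y.IsSymm ∧
      M = (1 : Matrix (Fin r) (Fin r) ℝ) ⊗ₖ (X - Y) + allOnes r ⊗ₖ Y := by
  obtain ⟨U, V, hUV⟩ := h
  obtain ⟨hU, hV⟩ := extract hr hM hUV
  refine ⟨U + V, V, hU.add hV, hV, ?_⟩
  show M = SM r (U + V - V) V
  simpa [add_sub_cancel_right] using hUV

end Stmt9Aux

open Stmt9Aux in
theorem stmt_9 {n : ℕ} (r : ℕ) (hr : 2 ≤ r)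
    (A B : Matrix (Fin n) (Fin n) ℝ) (hA : A.IsSymm) (hB : B.IsSymm)
    (hstab : SchurStable ((1 : Matrix (Fin r) (Fin r) ℝ) ⊗ₖ (A - B) + allOnes r ⊗ₖ B))
    (Q P : Matrix (Fin r × Fin n) (Fin r × Fin n) ℝ)
    (hQ : Q.PosDef) (hP : P.IsSymm)
    (hLyap : P = ((1 : Matrix (Fin r) (Fin r) ℝ) ⊗ₖ (A - B) + allOnes r ⊗ₖ B)ᵀ * P
        * ((1 : Matrix (Fin r) (Fin r) ℝ) ⊗ₖ (A - B) + allOnes r ⊗ₖ B) + Q) :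
    (∃ P₁ P₂ : Matrix (Fin n) (Fin n) ℝ, P₁.IsSymm ∧ P₂.IsSymm ∧
        P = (1 : Matrix (Fin r) (Fin r) ℝ) ⊗ₖ (P₁ - P₂) + allOnes r ⊗ₖ P₂)
    ↔ (∃ Q₁ Q₂ : Matrix (Fin n) (Fin n) ℝ, Q₁.IsSymm ∧ Q₂.IsSymm ∧
        Q = (1 : Matrix (Fin r) (Fin r) ℝ) ⊗ₖ (Q₁ - Q₂) + allOnes r ⊗ₖ Q₂) := by
  set 𝒜 : Matrix (Fin r × Fin n) (Fin r × Fin n) ℝ := SM r (A - B) B with h𝒜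
  have hLyap' : P = 𝒜ᵀ * P * 𝒜 + Q := hLyap
  have hstab' : SchurStable 𝒜 := hstab
  have h𝒜T : 𝒜ᵀ = 𝒜 := by
    rw [h𝒜, SM_transpose, Matrix.transpose_sub, hA, hB]
  have h𝒜symm : 𝒜.IsSymm := h𝒜T
  have hQsym : Q.IsSymm := by
    have h1 := hQ.1
    rwa [Matrix.IsHermitian, Matrix.conjTranspose_eq_transpose_of_trivial] at h1
  constructor
  · rintro ⟨P₁, P₂, _, _, hPeq⟩
    have hPeq' : P = SM r (P₁ - P₂) P₂ := hPeq
    apply pack hr hQsym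
    have hQP : Q = P - 𝒜ᵀ * P * 𝒜 := by
      rw [eq_sub_iff_add_eq, add_comm]
      exact hLyap'.symm
    rw [h𝒜T, hPeq', h𝒜, SM_mul, SM_mul, SM_sub] at hQP
    exact ⟨_, _, hQP⟩
  · rintro ⟨Q₁, Q₂, _, _, hQeq⟩
    have hQeq' : Q = SM r (Q₁ - Q₂) Q₂ := hQeq
    apply pack hr hP
    -- permutation invariance of P
    have hinv : ∀ σ : Equiv.Perm (Fin r),
        P.submatrix (σ.prodCongr (Equiv.refl (Fin n))) (σ.prodCongr (Equiv.refl (Fin n))) = P := by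
      intro σ
      set e := σ.prodCongr (Equiv.refl (Fin n)) with he
      have hSMe : ∀ X Y : Matrix (Fin n) (Fin n) ℝ, (SM r X Y).submatrix e e = SM r X Y := by
        intro X Y
        ext p q
        simp [Matrix.submatrix_apply, SM_apply, he, σ.injective.eq_iff]
      have h𝒜e : 𝒜.submatrix e e = 𝒜 := hSMe _ _
      have hQe : Q.submatrix e e = Q := by rw [hQeq']; exact hSMe _ _
      have hP' : P.submatrix ⇑e ⇑e = 𝒜ᵀ * P.submatrix ⇑e ⇑e * 𝒜 + Q := by
        conv_lhs => rw [hLyap']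
        have hadd : (𝒜ᵀ * P * 𝒜 + Q).submatrix ⇑e ⇑e
            = (𝒜ᵀ * P * 𝒜).submatrix ⇑e ⇑e + Q.submatrix ⇑e ⇑e := by
          ext p q; simp [Matrix.submatrix_apply, Matrix.add_apply]
        rw [hadd, hQe, ← Matrix.submatrix_mul_equiv (𝒜ᵀ * P) 𝒜 ⇑e e ⇑e,
          ← Matrix.submatrix_mul_equiv 𝒜ᵀ P ⇑e e ⇑e, h𝒜e,
          ← Matrix.transpose_submatrix, h𝒜e]
      have hD : P.submatrix ⇑e ⇑e - P = 𝒜ᵀ * (P.submatrix ⇑e ⇑e - P) * 𝒜 := by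
        calc P.submatrix ⇑e ⇑e - P
            = (𝒜ᵀ * P.submatrix ⇑e ⇑e * 𝒜 + Q) - (𝒜ᵀ * P * 𝒜 + Q) := by
              rw [← hP', ← hLyap']
        _ = 𝒜ᵀ * P.submatrix ⇑e ⇑e * 𝒜 - 𝒜ᵀ * P * 𝒜 := by abel
        _ = 𝒜ᵀ * (P.submatrix ⇑e ⇑e - P) * 𝒜 := by rw [Matrix.mul_sub, Matrix.sub_mul]
      have h0 := sym_fixed_zero h𝒜symm hstab' hD
      have := sub_eq_zero.mp h0
      exact this
    have h0r : (0 : ℕ) < r := by omega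
    have h1r : (1 : ℕ) < r := by omega
    set i0 : Fin r := ⟨0, h0r⟩ with hi0
    set i1 : Fin r := ⟨1, h1r⟩ with hi1
    have hne01 : i0 ≠ i1 := by simp [hi0, hi1, Fin.ext_iff]
    refine ⟨Matrix.of fun a b => P (i0, a) (i0, b) - P (i0, a) (i1, b),
            Matrix.of fun a b => P (i0, a) (i1, b), ?_⟩
    ext ⟨i, a⟩ ⟨j, b⟩
    simp only [SM_apply, Matrix.of_apply]
    by_cases hij : i = j
    · subst hij
      -- use σ = swap i0 i
      have hσ := hinv (Equiv.swap i0 i)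
      have := congrFun (congrFun hσ (i0, a)) (i0, b)
      simp only [Matrix.submatrix_apply, Equiv.prodCongr_apply, Prod.map,
        Equiv.swap_apply_left, Equiv.refl_apply] at this
      rw [if_pos rfl, ← this]
      ring
    · -- build σ with σ i0 = i, σ i1 = j
      set τ := Equiv.swap i0 i with hτ
      set j' := τ j with hj'
      have hτj' : τ j' = j := by rw [hj']; exact Equiv.swap_apply_self _ _ _
      have hj'0 : j' ≠ i0 := by
        intro hc
        apply hij
        rw [← hτj', hc, hτ, Equiv.swap_apply_left]
      set σ := τ * Equiv.swap i1 j' with hσd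
      have hσ0 : σ i0 = i := by
        rw [hσd, Equiv.Perm.mul_apply, Equiv.swap_apply_of_ne_of_ne hne01 (Ne.symm hj'0),
          hτ, Equiv.swap_apply_left]
      have hσ1 : σ i1 = j := by
        rw [hσd, Equiv.Perm.mul_apply, Equiv.swap_apply_left, hτj']
      have hσ := hinv σ
      have := congrFun (congrFun hσ (i0, a)) (i1, b)
      simp only [Matrix.submatrix_apply, Equiv.prodCongr_apply, Prod.map,
        Equiv.refl_apply, hσ0, hσ1] at this
      rw [if_neg hij, ← this]
      ring
end

section
/- Let A be a real n×n matrix, B a real n×m matrix, K, L real m×n matrices, Q̃ a symmetric positive definite n×n matrix, and R a symmetric positive definite m×m matrix. Set ΔK = K − L and A_ΔK = A + B·ΔK, and suppose a symmetric positive definite matrix ΔP satisfies the Lyapunov equation ΔP = A_ΔKᵀ ΔP A_ΔK + Q̃ + ΔKᵀ R ΔK. Let γ > 0 be a real number such that γ·(A_ΔKᵀ ΔP A_ΔK + Lᵀ Bᵀ ΔP B L) ⪯ Q̃ + ΔKᵀ R ΔK in the Loewner (positive semidefinite) order, and set τ = √(γ²/(1+γ)). Then for every real number α with |α − 1| < τ,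 the matrix A + B(K − α·L) is Schur stable. -/
open Matrix

lemma re_quad {n : ℕ} (P : Matrix (Fin n) (Fin n) ℝ) (v : Fin n → ℂ) :
    (star v ⬝ᵥ (P.map (algebraMap ℝ ℂ)) *ᵥ v).re
      = (fun i => (v i).re) ⬝ᵥ (P *ᵥ fun i => (v i).re)
        + (fun i => (v i).im) ⬝ᵥ (P *ᵥ fun i => (v i).im) := by
  simp only [dotProduct, mulVec, map_apply, Complex.re_sum, ← Finset.sum_add_distrib]
  refine Finset.sum_congr rfl fun i _ => ?_
  simp only [dotProduct, Pi.star_apply, Finset.mul_sum, Complex.re_sum, Finset.sum_mul,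
    ← Finset.sum_add_distrib]
  refine Finset.sum_congr rfl fun j _ => ?_
  simp [Complex.mul_re, Complex.mul_im]

lemma posdef_complexify {n : ℕ} {P : Matrix (Fin n) (Fin n) ℝ} (hP : P.PosDef)
    {v : Fin n → ℂ} (hv : v ≠ 0) :
    0 < (star v ⬝ᵥ (P.map (algebraMap ℝ ℂ)) *ᵥ v).re := by
  rw [re_quad]
  set x : Fin n → ℝ := fun i => (v i).re with hx
  set y : Fin n → ℝ := fun i => (v i).im with hy
  have hxy : x ≠ 0 ∨ y ≠ 0 := by
    by_contra h
    push_neg at h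
    apply hv
    funext i
    have h1 := congrFun h.1 i
    have h2 := congrFun h.2 i
    simp only [hx, hy, Pi.zero_apply] at h1 h2
    exact Complex.ext h1 h2
  have hpsd := hP.posSemidef
  rcases hxy with h | h
  · have h1 : 0 < x ⬝ᵥ (P *ᵥ x) := by simpa using hP.dotProduct_mulVec_pos h
    have h2 : 0 ≤ y ⬝ᵥ (P *ᵥ y) := by simpa using hpsd.dotProduct_mulVec_nonneg y
    linarith
  · have h1 : 0 ≤ x ⬝ᵥ (P *ᵥ x) := by simpa using hpsd.dotProduct_mulVec_nonneg x
    have h2 : 0 < y ⬝ᵥ (P *ᵥ y) := by simpa using hP.dotProduct_mulVec_pos h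
    linarith

lemma schur_of_lyapunov {n : ℕ} (M P : Matrix (Fin n) (Fin n) ℝ) (hP : P.PosDef)
    (hD : (P - Mᵀ * P * M).PosDef) : SchurStable M := by
  intro μ hμ
  set Mc := M.map (algebraMap ℝ ℂ) with hMc
  rw [← AlgEquiv.spectrum_eq (Matrix.toLinAlgEquiv' : Matrix (Fin n) (Fin n) ℂ ≃ₐ[ℂ] _)] at hμ
  obtain ⟨v, hv⟩ := (Module.End.hasEigenvalue_iff_mem_spectrum.mpr hμ).exists_hasEigenvector
  have hv0 : v ≠ 0 := hv.right
  have hveq : Mc *ᵥ v = μ • v := by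
    have := hv.apply_eq_smul
    simpa [Matrix.toLinAlgEquiv'_apply] using this
  set Pc := P.map (algebraMap ℝ ℂ) with hPc
  have hMcH : Mcᴴ = Mcᵀ := by
    ext i j
    simp [hMc, Matrix.conjTranspose_apply, Complex.conj_ofReal]
  have hmap : (P - Mᵀ * P * M).map (algebraMap ℝ ℂ) = Pc - Mcᵀ * Pc * Mc := by
    rw [Matrix.map_sub _ (fun a b => by simp), Matrix.map_mul (f := algebraMap ℝ ℂ),
      Matrix.map_mul (f := algebraMap ℝ ℂ), Matrix.transpose_map]
  have h1 : 0 < (star v ⬝ᵥ Pc *ᵥ v).re := posdef_complexify hP hv0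
  have h2 : 0 < (star v ⬝ᵥ ((P - Mᵀ * P * M).map (algebraMap ℝ ℂ)) *ᵥ v).re :=
    posdef_complexify hD hv0
  rw [hmap] at h2
  have key : star v ⬝ᵥ ((Mcᵀ * Pc * Mc) *ᵥ v) = star (Mc *ᵥ v) ⬝ᵥ (Pc *ᵥ (Mc *ᵥ v)) := by
    rw [star_mulVec, hMcH]
    simp [Matrix.dotProduct_mulVec, Matrix.vecMul_vecMul, Matrix.mulVec_mulVec, mul_assoc]
  have key2 : star (Mc *ᵥ v) ⬝ᵥ (Pc *ᵥ (Mc *ᵥ v))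
      = (Complex.normSq μ : ℂ) * (star v ⬝ᵥ Pc *ᵥ v) := by
    rw [hveq, star_smul, Matrix.mulVec_smul, smul_dotProduct, dotProduct_smul]
    simp only [smul_eq_mul, ← mul_assoc]
    rw [show star μ = (starRingEnd ℂ) μ from rfl, ← Complex.normSq_eq_conj_mul_self]
  have h3 : (star v ⬝ᵥ (Pc - Mcᵀ * Pc * Mc) *ᵥ v).re
      = (1 - Complex.normSq μ) * (star v ⬝ᵥ Pc *ᵥ v).re := by
    rw [Matrix.sub_mulVec, dotProduct_sub, key, key2]
    rw [Complex.sub_re, Complex.mul_re]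
    simp
    ring
  rw [h3] at h2
  have hn : Complex.normSq μ < 1 := by nlinarith
  have habs : ‖μ‖ ^ 2 < 1 := by rw [Complex.sq_norm]; exact hn
  nlinarith [norm_nonneg μ]

lemma psd_conj {n m : ℕ} {P : Matrix (Fin m) (Fin m) ℝ} (hP : P.PosSemidef)
    (Z : Matrix (Fin m) (Fin n) ℝ) : (Zᵀ * P * Z).PosSemidef := by
  simpa [Matrix.conjTranspose_eq_transpose_of_trivial] using hP.conjTranspose_mul_mul_same Z

lemma psd_smul {n : ℕ} {S : Matrix (Fin n) (Fin n) ℝ} (hS : S.PosSemidef) {c : ℝ} (hc : 0 ≤ c) :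
    (c • S).PosSemidef := by
  refine Matrix.PosSemidef.of_dotProduct_mulVec_nonneg ?_ fun x => ?_
  · have := hS.1
    rw [Matrix.IsHermitian, Matrix.conjTranspose_smul, this]
    simp
  · rw [Matrix.smul_mulVec, dotProduct_smul, smul_eq_mul]
    exact mul_nonneg hc (hS.dotProduct_mulVec_nonneg x)

lemma pd_smul {n : ℕ} {S : Matrix (Fin n) (Fin n) ℝ} (hS : S.PosDef) {c : ℝ} (hc : 0 < c) :
    (c • S).PosDef := by
  refine Matrix.PosDef.of_dotProduct_mulVec_pos ?_ fun x hx => ?_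
  · have := hS.1
    rw [Matrix.IsHermitian, Matrix.conjTranspose_smul, this]
    simp
  · rw [Matrix.smul_mulVec, dotProduct_smul, smul_eq_mul]
    exact mul_pos hc (hS.dotProduct_mulVec_pos hx)

lemma key_identity {n : ℕ} (N C P S : Matrix (Fin n) (Fin n) ℝ) (ε δ γ : ℝ)
    (hδ : δ ≠ 0) (hγ : γ ≠ 0) (hq : δ * δ = ε ^ 2 * δ + ε ^ 2)
    (hP : P = Nᵀ * P * N + S) :
    P - (N + ε • C)ᵀ * P * (N + ε • C)
      = (1 - δ / γ) • S + (δ / γ) • (S - γ • (Nᵀ * P * N + Cᵀ * P * C))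
        + δ⁻¹ • ((δ • N - ε • C)ᵀ * P * (δ • N - ε • C)) := by
  nth_rewrite 1 [hP]
  simp only [Matrix.transpose_add, Matrix.transpose_smul, Matrix.transpose_sub]
  simp only [Matrix.add_mul, Matrix.mul_add, Matrix.sub_mul, Matrix.mul_sub,
    Matrix.smul_mul, Matrix.mul_smul, smul_smul, smul_sub, smul_add, sub_smul]
  match_scalars <;> field_simp <;> ring_nf <;> nlinarith [hq, sq_nonneg ε, sq_nonneg δ]

theorem stmt_12 {n m : ℕ}
    (A : Matrix (Fin n) (Fin n) ℝ) (B : Matrix (Fin n) (Fin m) ℝ)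
    (K L : Matrix (Fin m) (Fin n) ℝ)
    (Qt : Matrix (Fin n) (Fin n) ℝ) (hQt : Qt.PosDef)
    (R : Matrix (Fin m) (Fin m) ℝ) (hR : R.PosDef)
    (ΔP : Matrix (Fin n) (Fin n) ℝ) (hΔP : ΔP.PosDef)
    (hLyap : ΔP = (A + B * (K - L))ᵀ * ΔP * (A + B * (K - L))
        + Qt + (K - L)ᵀ * R * (K - L))
    (γ : ℝ) (hγ : 0 < γ)
    (hLoewner : (Qt + (K - L)ᵀ * R * (K - L)
        - γ • ((A + B * (K - L))ᵀ * ΔP * (A + B * (K - L))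
            + Lᵀ * Bᵀ * ΔP * B * L)).PosSemidef)
    (α : ℝ) (hα : |α - 1| < Real.sqrt (γ ^ 2 / (1 + γ))) :
    SchurStable (A + B * (K - α • L)) := by
  set ΔK := K - L with hΔK
  set N := A + B * ΔK with hN
  set C := B * L with hC
  set S := Qt + ΔKᵀ * R * ΔK with hS
  obtain ⟨ε, hε⟩ : ∃ ε : ℝ, ε = 1 - α := ⟨_, rfl⟩
  have hMeq : A + B * (K - α • L) = N + ε • C := by
    rw [hN, hC, hΔK, hε]
    rw [show K - α • L = (K - L) + (1 - α) • L by module]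
    rw [Matrix.mul_add, Matrix.mul_smul]
    abel
  rw [hMeq]
  have hSpd : S.PosDef := hQt.add_posSemidef (psd_conj hR.posSemidef ΔK)
  have hLyap' : ΔP = Nᵀ * ΔP * N + S := hLyap.trans (add_assoc _ _ _)
  have hαε : |ε| < Real.sqrt (γ ^ 2 / (1 + γ)) := by rw [hε, abs_sub_comm]; exact hα
  have hγ1 : 0 < 1 + γ := by linarith
  by_cases hε0 : ε = 0
  · rw [hε0, zero_smul, add_zero]
    apply schur_of_lyapunov _ ΔP hΔP
    have hrw : ΔP - Nᵀ * ΔP * N = S := by nth_rewrite 1 [hLyap']; abel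
    rw [hrw]
    exact hSpd
  · have he2 : ε ^ 2 < γ ^ 2 / (1 + γ) := by
      nlinarith [sq_abs ε, Real.sq_sqrt (show (0:ℝ) ≤ γ ^ 2 / (1 + γ) by positivity),
        Real.sqrt_nonneg (γ ^ 2 / (1 + γ)), abs_nonneg ε, hαε]
    have hε2pos : 0 < ε ^ 2 := by positivity
    have hε21 : ε ^ 2 * (1 + γ) < γ ^ 2 := (lt_div_iff₀ hγ1).mp he2
    obtain ⟨s, hspos, hs2⟩ : ∃ s : ℝ, 0 < s ∧ s ^ 2 = ε ^ 4 + 4 * ε ^ 2 :=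
      ⟨Real.sqrt (ε ^ 4 + 4 * ε ^ 2), Real.sqrt_pos.mpr (by positivity),
        Real.sq_sqrt (by positivity)⟩
    have hεγ : ε ^ 2 < γ := by nlinarith [hε21, hγ, hγ1, hε2pos]
    have h2γ : 0 < 2 * γ - ε ^ 2 := by linarith
    have hkey : s < 2 * γ - ε ^ 2 :=
      lt_of_pow_lt_pow_left₀ 2 h2γ.le (by nlinarith [hs2, hε21])
    obtain ⟨δ, hδpos, hq, hδγ⟩ : ∃ δ : ℝ, 0 < δ ∧ δ * δ = ε ^ 2 * δ + ε ^ 2 ∧ δ < γ :=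
      ⟨(ε ^ 2 + s) / 2, by linarith, by nlinarith [hs2], by linarith⟩
    apply schur_of_lyapunov _ ΔP hΔP
    rw [key_identity N C ΔP S ε δ γ (ne_of_gt hδpos) (ne_of_gt hγ) hq hLyap']
    have hL' : (S - γ • (Nᵀ * ΔP * N + Cᵀ * ΔP * C)).PosSemidef := by
      have hCC : Cᵀ * ΔP * C = Lᵀ * Bᵀ * ΔP * B * L := by
        rw [hC, Matrix.transpose_mul]
        simp only [Matrix.mul_assoc]
      rw [hCC]
      exact hLoewner
    have t1 : ((1 - δ / γ) • S).PosDef := by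
      apply pd_smul hSpd
      have : δ / γ < 1 := (div_lt_one hγ).mpr hδγ
      linarith
    have t2 : ((δ / γ) • (S - γ • (Nᵀ * ΔP * N + Cᵀ * ΔP * C))).PosSemidef :=
      psd_smul hL' (by positivity)
    have t3 : (δ⁻¹ • ((δ • N - ε • C)ᵀ * ΔP * (δ • N - ε • C))).PosSemidef :=
      psd_smul (psd_conj hΔP.posSemidef _) (by positivity)
    exact (t1.add_posSemidef t2).add_posSemidef t3
end

section
/- Let M and N be complex n×n matrices, S a complex p×p matrix, and let μ be an eigenvalue of I_p ⊗ M + S ⊗ N (where ⊗ denotes the Kronecker product). Then there exists an eigenvalue λ of S such that μ is an eigenvalue of M + λ·N. -/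
open Matrix Polynomial
open scoped Kronecker

section Aux

variable {n p : ℕ}

/-- Left multiplication as a ring hom into endomorphisms of `Matrix n p`. -/
noncomputable def lmulHom (n p : ℕ) : Matrix (Fin n) (Fin n) ℂ →+* Module.End ℂ (Matrix (Fin n) (Fin p) ℂ) where
  toFun A :=
    { toFun := fun W => A * W
      map_add' := fun x y => Matrix.mul_add A x y
      map_smul' := fun c x => (Matrix.mul_smul A c x) }
  map_one' := by ext W : 1; exact Matrix.one_mul W
  map_mul' A B := by ext W : 1; exact (Matrix.mul_assoc A B W)
  map_zero' := by ext W : 1; exact Matrix.zero_mul W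
  map_add' A B := by ext W : 1; exact Matrix.add_mul A B W

/-- Right multiplication by a fixed matrix as an endomorphism. -/
noncomputable def rmulEnd (T : Matrix (Fin p) (Fin p) ℂ) (n : ℕ) :
    Module.End ℂ (Matrix (Fin n) (Fin p) ℂ) where
  toFun W := W * T
  map_add' x y := Matrix.add_mul x y T
  map_smul' c x := Matrix.smul_mul c x T

lemma lmul_comm_rmul (T : Matrix (Fin p) (Fin p) ℂ) (A : Matrix (Fin n) (Fin n) ℂ) :
    Commute (lmulHom n p A) (rmulEnd T n) := by
  ext W : 1
  simp [lmulHom, rmulEnd, Module.End.mul_apply, Matrix.mul_assoc]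

lemma rmulEnd_pow (T : Matrix (Fin p) (Fin p) ℂ) (k : ℕ) (W : Matrix (Fin n) (Fin p) ℂ) :
    ((rmulEnd T n) ^ k) W = W * T ^ k := by
  induction k with
  | zero => simp
  | succ k ih =>
    rw [pow_succ', Module.End.mul_apply, ih]
    simp [rmulEnd, Matrix.mul_assoc, ← pow_succ]

end Aux

set_option maxRecDepth 10000 in
theorem stmt_13 {n p : ℕ} (M N : Matrix (Fin n) (Fin n) ℂ)
    (S : Matrix (Fin p) (Fin p) ℂ) (μ : ℂ)
    (hμ : μ ∈ spectrum ℂ ((1 : Matrix (Fin p) (Fin p) ℂ) ⊗ₖ M + S ⊗ₖ N)) :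
    ∃ lam ∈ spectrum ℂ S, μ ∈ spectrum ℂ (M + lam • N) := by
  classical
  rcases Nat.eq_zero_or_pos p with hp | hp
  · subst hp
    haveI : IsEmpty (Fin 0 × Fin n) := by infer_instance
    rw [spectrum.mem_iff] at hμ
    exact absurd (isUnit_of_subsingleton _) hμ
  rcases Nat.eq_zero_or_pos n with hn | hn
  · subst hn
    haveI : IsEmpty (Fin p × Fin 0) := by infer_instance
    rw [spectrum.mem_iff] at hμ
    exact absurd (isUnit_of_subsingleton _) hμ
  haveI : Nonempty (Fin p) := ⟨⟨0, hp⟩⟩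
  haveI : Nonempty (Fin n) := ⟨⟨0, hn⟩⟩
  -- extract an eigenvector
  have hdet : (μ • (1 : Matrix (Fin p × Fin n) (Fin p × Fin n) ℂ)
      - ((1 : Matrix (Fin p) (Fin p) ℂ) ⊗ₖ M + S ⊗ₖ N)).det = 0 := by
    rw [spectrum.mem_iff] at hμ
    by_contra h
    exact hμ <| (Matrix.isUnit_iff_isUnit_det _).2 (isUnit_iff_ne_zero.2 (by
      simpa [Algebra.algebraMap_eq_smul_one] using h))
  obtain ⟨v, hv0, hv⟩ := (Matrix.exists_mulVec_eq_zero_iff).2 hdet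
  set W : Matrix (Fin n) (Fin p) ℂ := fun k i => v (i, k) with hW
  have hWne : W ≠ 0 := by
    intro h
    apply hv0
    funext x
    have := congrFun (congrFun h x.2) x.1
    simpa [hW] using this
  -- the key relation : μ • W - (M * W + N * W * Sᵀ) = 0
  have hrel : μ • W - (M * W + N * W * Sᵀ) = 0 := by
    funext k i
    have h1 := congrFun hv (i, k)
    simp only [Matrix.mulVec, dotProduct, Matrix.sub_apply, Matrix.add_apply,
      Matrix.smul_apply, Matrix.one_apply, Matrix.kroneckerMap_apply, smul_eq_mul,
      Fintype.sum_prod_type, Pi.zero_apply] at h1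
    simp only [Matrix.sub_apply, Matrix.smul_apply, Matrix.add_apply, Matrix.mul_apply,
      Matrix.transpose_apply, Pi.zero_apply, Matrix.zero_apply, smul_eq_mul]
    simp only [hW]
    simp only [mul_ite, mul_one, mul_zero, Prod.mk.injEq, ite_and, sub_mul, add_mul,
      ite_mul, zero_mul, one_mul, Finset.sum_sub_distrib, Finset.sum_add_distrib,
      Finset.sum_ite_eq, Finset.sum_ite_eq', Finset.mem_univ, if_true,
      Finset.sum_ite_irrel, Finset.sum_const_zero] at h1
    have e2 : ∑ x : Fin p, (∑ j, N k j * v (x, j)) * S i x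
        = ∑ x : Fin p, ∑ x_1 : Fin n, S i x * N k x_1 * v (x, x_1) := by
      refine Finset.sum_congr rfl fun x _ => ?_
      rw [Finset.sum_mul]
      exact Finset.sum_congr rfl fun y _ => by ring
    rw [e2]
    exact h1
  -- polynomial machinery
  set f := lmulHom n p with hf
  set t := rmulEnd Sᵀ n with ht
  have hcomm := lmul_comm_rmul (n := n) Sᵀ
  set Φ : (Matrix (Fin n) (Fin n) ℂ)[X] →+* Module.End ℂ (Matrix (Fin n) (Fin p) ℂ) :=
    eval₂RingHom' f t hcomm with hΦ
  set R' : Matrix (Fin n) (Fin n) ℂ[X] :=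
    (μ • (1 : Matrix (Fin n) (Fin n) ℂ) - M).map C - (X : ℂ[X]) • N.map C with hR'
  set q : ℂ[X] := R'.det with hq
  have hmpe : matPolyEquiv R' = C (μ • (1 : Matrix (Fin n) (Fin n) ℂ) - M) - X * C N := by
    rw [hR', map_sub, matPolyEquiv_map_C, matPolyEquiv_map_smul, matPolyEquiv_map_C,
      Polynomial.map_X]
  have hadj : matPolyEquiv (adjugate R') * (C (μ • (1 : Matrix (Fin n) (Fin n) ℂ) - M) - X * C N)
      = q.map (algebraMap ℂ (Matrix (Fin n) (Fin n) ℂ)) := by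
    rw [← hmpe, ← _root_.map_mul, Matrix.adjugate_mul, hq, matPolyEquiv_smul_one]
  have hker : Φ (C (μ • (1 : Matrix (Fin n) (Fin n) ℂ) - M) - X * C N) W = 0 := by
    have h2 : Φ (C (μ • (1 : Matrix (Fin n) (Fin n) ℂ) - M) - X * C N)
        = f (μ • 1 - M) - t * f N := by
      rw [map_sub, _root_.map_mul]
      simp [hΦ, eval₂RingHom'_apply, eval₂_C, eval₂_X]
    rw [h2]
    have : (f (μ • 1 - M) - t * f N) W
        = μ • W - (M * W + N * W * Sᵀ) := by
      simp only [LinearMap.sub_apply, Module.End.mul_apply, hf, ht, lmulHom, rmulEnd,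
        RingHom.coe_mk, MonoidHom.coe_mk, OneHom.coe_mk, LinearMap.coe_mk, AddHom.coe_mk]
      rw [Matrix.sub_mul, Matrix.smul_mul, Matrix.one_mul]
      abel
    rw [this, hrel]
  have hEval : ∀ (r : ℂ[X]) (w : Matrix (Fin n) (Fin p) ℂ),
      Φ (r.map (algebraMap ℂ (Matrix (Fin n) (Fin n) ℂ))) w = w * (aeval Sᵀ r) := by
    intro r
    induction r using Polynomial.induction_on' with
    | add r1 r2 h1 h2 =>
      intro w
      simp only [Polynomial.map_add, map_add, LinearMap.add_apply, h1, h2, Matrix.mul_add]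
    | monomial k c =>
      intro w
      rw [Polynomial.map_monomial]
      have : Φ ((monomial k) (algebraMap ℂ (Matrix (Fin n) (Fin n) ℂ) c))
          = f (algebraMap ℂ (Matrix (Fin n) (Fin n) ℂ) c) * t ^ k := by
        simp [hΦ, eval₂RingHom'_apply, eval₂_monomial]
      rw [this, Module.End.mul_apply, rmulEnd_pow]
      simp only [hf, lmulHom, RingHom.coe_mk, MonoidHom.coe_mk, OneHom.coe_mk,
        LinearMap.coe_mk, AddHom.coe_mk, aeval_monomial]
      rw [Algebra.algebraMap_eq_smul_one, Algebra.algebraMap_eq_smul_one,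
        Matrix.smul_mul, Matrix.one_mul, Matrix.smul_mul, Matrix.one_mul, Matrix.mul_smul]
  have hq0 : W * aeval Sᵀ q = 0 := by
    have h4 : Φ (matPolyEquiv (adjugate R'))
        ((Φ (C (μ • (1 : Matrix (Fin n) (Fin n) ℂ) - M) - X * C N)) W)
        = Φ (q.map (algebraMap ℂ (Matrix (Fin n) (Fin n) ℂ))) W := by
      rw [← Module.End.mul_apply, ← _root_.map_mul, hadj]
    rw [hker, map_zero] at h4
    rw [← hEval q W, ← h4]
  have hnu : ¬ IsUnit (aeval Sᵀ q) := by
    rintro ⟨u, hu⟩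
    apply hWne
    have h5 : W * ((aeval Sᵀ q) * (↑u⁻¹ : Matrix (Fin p) (Fin p) ℂ)) = W := by
      rw [← hu, Units.mul_inv, Matrix.mul_one]
    rw [← Matrix.mul_assoc, hq0, Matrix.zero_mul] at h5
    exact h5.symm
  have h0 : (0 : ℂ) ∈ spectrum ℂ (aeval Sᵀ q) := by
    rw [spectrum.mem_iff, map_zero, zero_sub, IsUnit.neg_iff]
    exact hnu
  haveI : Nontrivial (Matrix (Fin p) (Fin p) ℂ) := by infer_instance
  have hne : (spectrum ℂ Sᵀ).Nonempty :=
    spectrum.nonempty_of_isAlgClosed_of_finiteDimensional ℂ Sᵀ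
  rw [spectrum.map_polynomial_aeval_of_nonempty Sᵀ q hne] at h0
  obtain ⟨lam, hlam, hev⟩ := h0
  refine ⟨lam, ?_, ?_⟩
  · rw [spectrum.mem_iff] at hlam ⊢
    intro h
    apply hlam
    rw [Matrix.isUnit_iff_isUnit_det] at h ⊢
    have e3 : algebraMap ℂ (Matrix (Fin p) (Fin p) ℂ) lam - Sᵀ
        = (algebraMap ℂ (Matrix (Fin p) (Fin p) ℂ) lam - S)ᵀ := by
      ext i j
      by_cases hij : i = j <;>
        simp [Matrix.algebraMap_matrix_apply, hij, eq_comm]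
    rwa [e3, Matrix.det_transpose]
  · have e4 : eval lam q = (algebraMap ℂ (Matrix (Fin n) (Fin n) ℂ) μ - (M + lam • N)).det := by
      rw [hq, show eval lam R'.det = (evalRingHom lam) R'.det from rfl,
        RingHom.map_det (evalRingHom lam) R']
      congr 1
      ext i j
      simp only [RingHom.mapMatrix_apply, hR', Matrix.map_apply, Matrix.sub_apply,
        Matrix.smul_apply, Matrix.add_apply, Matrix.algebraMap_matrix_apply,
        Matrix.one_apply, smul_eq_mul, coe_evalRingHom, eval_sub, eval_mul, eval_C, eval_X]
      by_cases hij : i = j <;> simp [hij] <;> ring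
    rw [spectrum.mem_iff, Matrix.isUnit_iff_isUnit_det, isUnit_iff_ne_zero, ne_eq, not_not,
      ← e4]
    exact hev
end

section
/- Let A be a real n×n matrix, B a real n×m matrix, K, L real m×n matrices, and S a symmetric real p×p matrix. Suppose that for every (real) eigenvalue λ of S, the matrix A + B(K − λ·L) is Schur stable. Then the matrix I_p ⊗ (A + BK) − S ⊗ (BL) is Schur stable. -/
open Matrix
open scoped Kronecker

lemma mem_spectrum_iff_det {N : Type*} [Fintype N] [DecidableEq N]
    (M : Matrix N N ℂ) (μ : ℂ) :
    μ ∈ spectrum ℂ M ↔ (μ • (1 : Matrix N N ℂ) - M).det = 0 := by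
  rw [spectrum.mem_iff, Matrix.isUnit_iff_isUnit_det]
  simp [Algebra.algebraMap_eq_smul_one, isUnit_iff_ne_zero]

lemma map_kron {l m p q : Type*} (A : Matrix l m ℝ) (B : Matrix p q ℝ) :
    (A ⊗ₖ B).map (algebraMap ℝ ℂ) = (A.map (algebraMap ℝ ℂ)) ⊗ₖ (B.map (algebraMap ℝ ℂ)) := by
  ext ⟨i, j⟩ ⟨k, l⟩
  simp [Matrix.kroneckerMap_apply]

theorem stmt_14 {n m p : ℕ}
    (A : Matrix (Fin n) (Fin n) ℝ) (B : Matrix (Fin n) (Fin m) ℝ)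
    (K L : Matrix (Fin m) (Fin n) ℝ)
    (S : Matrix (Fin p) (Fin p) ℝ) (hS : S.IsSymm)
    (h : ∀ lam ∈ spectrum ℝ S, SchurStable (A + B * (K - lam • L))) :
    SchurStable ((1 : Matrix (Fin p) (Fin p) ℝ) ⊗ₖ (A + B * K) - S ⊗ₖ (B * L)) := by
  have hH : S.IsHermitian := by
    rw [Matrix.IsHermitian, conjTranspose_eq_transpose_of_trivial]; exact hS
  intro μ hμ
  set φ := algebraMap ℝ ℂ
  set d : Fin p → ℝ := hH.eigenvalues with hd
  set U : Matrix (Fin p) (Fin p) ℝ := (hH.eigenvectorUnitary : Matrix (Fin p) (Fin p) ℝ)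
  set Uc : Matrix (Fin p) (Fin p) ℂ := U.map φ
  set V : Matrix (Fin p) (Fin p) ℂ := (star U).map φ
  have hUV : Uc * V = 1 := by
    rw [← Matrix.map_mul, (Matrix.mem_unitaryGroup_iff).mp hH.eigenvectorUnitary.2]
    simp [Matrix.map_one]
  have hVU : V * Uc = 1 := by
    rw [← Matrix.map_mul, (Matrix.mem_unitaryGroup_iff').mp hH.eigenvectorUnitary.2]
    simp [Matrix.map_one]
  set X : Matrix (Fin n) (Fin n) ℂ := (A + B * K).map φ
  set Y : Matrix (Fin n) (Fin n) ℂ := (B * L).map φ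
  set Dc : Matrix (Fin p) (Fin p) ℂ := Matrix.diagonal (fun i => (d i : ℂ))
  have hSc : S.map φ = Uc * Dc * V := by
    conv_lhs => rw [hH.spectral_theorem]
    rw [Unitary.conjStarAlgAut_apply, Matrix.map_mul, Matrix.map_mul]
    congr 1
    congr 1
    rw [Matrix.diagonal_map (by simp)]
    rfl
  -- determinant factorization
  have key : (μ • (1 : Matrix (Fin p × Fin n) (Fin p × Fin n) ℂ)
        - (((1 : Matrix (Fin p) (Fin p) ℝ) ⊗ₖ (A + B * K) - S ⊗ₖ (B * L)).map φ)).det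
      = ∏ i, (μ • (1 : Matrix (Fin n) (Fin n) ℂ) - (X - (d i : ℂ) • Y)).det := by
    have hmap : ((1 : Matrix (Fin p) (Fin p) ℝ) ⊗ₖ (A + B * K) - S ⊗ₖ (B * L)).map φ
        = (1 : Matrix (Fin p) (Fin p) ℂ) ⊗ₖ X - (S.map φ) ⊗ₖ Y := by
      ext ⟨i, j⟩ ⟨k, l⟩
      simp only [Matrix.map_apply, Matrix.sub_apply, Matrix.kroneckerMap_apply, map_sub, _root_.map_mul,
        X, Y]
      by_cases hik : i = k <;> simp [Matrix.one_apply, hik]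
    rw [hmap, hSc]
    have conj : μ • (1 : Matrix (Fin p × Fin n) (Fin p × Fin n) ℂ)
          - ((1 : Matrix (Fin p) (Fin p) ℂ) ⊗ₖ X - (Uc * Dc * V) ⊗ₖ Y)
        = (Uc ⊗ₖ (1 : Matrix (Fin n) (Fin n) ℂ))
          * (μ • (1 : Matrix (Fin p × Fin n) (Fin p × Fin n) ℂ)
              - ((1 : Matrix (Fin p) (Fin p) ℂ) ⊗ₖ X - Dc ⊗ₖ Y))
          * (V ⊗ₖ (1 : Matrix (Fin n) (Fin n) ℂ)) := by
      have e1 : (Uc ⊗ₖ (1 : Matrix (Fin n) (Fin n) ℂ)) * ((1 : Matrix (Fin p) (Fin p) ℂ) ⊗ₖ X)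
          * (V ⊗ₖ (1 : Matrix (Fin n) (Fin n) ℂ)) = (1 : Matrix (Fin p) (Fin p) ℂ) ⊗ₖ X := by
        simp [← Matrix.mul_kronecker_mul, hUV]
      have e2 : (Uc ⊗ₖ (1 : Matrix (Fin n) (Fin n) ℂ)) * (Dc ⊗ₖ Y)
          * (V ⊗ₖ (1 : Matrix (Fin n) (Fin n) ℂ)) = (Uc * Dc * V) ⊗ₖ Y := by
        simp [← Matrix.mul_kronecker_mul]
      have e3 : (Uc ⊗ₖ (1 : Matrix (Fin n) (Fin n) ℂ))
          * (V ⊗ₖ (1 : Matrix (Fin n) (Fin n) ℂ)) = 1 := by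
        simp [← Matrix.mul_kronecker_mul, hUV, Matrix.one_kronecker_one]
      rw [Matrix.mul_sub, Matrix.sub_mul, Matrix.mul_sub, Matrix.sub_mul, e1, e2]
      congr 1
      rw [Matrix.mul_smul, Matrix.mul_one, Matrix.smul_mul, e3]
    rw [conj, Matrix.det_mul, Matrix.det_mul]
    have hdet1 : (Uc ⊗ₖ (1 : Matrix (Fin n) (Fin n) ℂ)).det
        * (V ⊗ₖ (1 : Matrix (Fin n) (Fin n) ℂ)).det = 1 := by
      rw [← Matrix.det_mul, ← Matrix.mul_kronecker_mul, hUV, Matrix.one_mul,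
        Matrix.one_kronecker_one, Matrix.det_one]
    calc (Uc ⊗ₖ (1 : Matrix (Fin n) (Fin n) ℂ)).det
          * (μ • 1 - ((1 : Matrix (Fin p) (Fin p) ℂ) ⊗ₖ X - Dc ⊗ₖ Y)).det
          * (V ⊗ₖ (1 : Matrix (Fin n) (Fin n) ℂ)).det
        = ((Uc ⊗ₖ (1 : Matrix (Fin n) (Fin n) ℂ)).det
            * (V ⊗ₖ (1 : Matrix (Fin n) (Fin n) ℂ)).det)
          * (μ • 1 - ((1 : Matrix (Fin p) (Fin p) ℂ) ⊗ₖ X - Dc ⊗ₖ Y)).det := by ring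
      _ = (μ • 1 - ((1 : Matrix (Fin p) (Fin p) ℂ) ⊗ₖ X - Dc ⊗ₖ Y)).det := by
          rw [hdet1, one_mul]
      _ = ∏ i, (μ • (1 : Matrix (Fin n) (Fin n) ℂ) - (X - (d i : ℂ) • Y)).det := by
          have hblock : μ • (1 : Matrix (Fin p × Fin n) (Fin p × Fin n) ℂ)
              - ((1 : Matrix (Fin p) (Fin p) ℂ) ⊗ₖ X - Dc ⊗ₖ Y)
            = (Matrix.reindex (Equiv.prodComm (Fin n) (Fin p)) (Equiv.prodComm (Fin n) (Fin p)))
                (Matrix.blockDiagonal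
                  (fun i => μ • (1 : Matrix (Fin n) (Fin n) ℂ) - (X - (d i : ℂ) • Y))) := by
            ext ⟨i, j⟩ ⟨k, l⟩
            by_cases hik : i = k
            · subst hik
              by_cases hjl : j = l <;>
                simp [Matrix.one_apply, Matrix.blockDiagonal_apply, Matrix.kroneckerMap_apply,
                  Dc, hjl, Matrix.diagonal_apply_eq, mul_comm]
            · simp [Matrix.one_apply, Matrix.blockDiagonal_apply, Matrix.kroneckerMap_apply,
                Dc, hik, Matrix.diagonal_apply_ne _ hik, Ne.symm hik]
          rw [hblock, Matrix.reindex_apply, Matrix.det_submatrix_equiv_self,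
            Matrix.det_blockDiagonal]
  rw [mem_spectrum_iff_det, key] at hμ
  obtain ⟨i, -, hi⟩ := Finset.prod_eq_zero_iff.mp hμ
  refine h (d i) (hH.eigenvalues_mem_spectrum_real i) μ ?_
  rw [mem_spectrum_iff_det]
  convert hi using 3
  ext a b
  simp [X, Y, φ, Matrix.sub_apply, Matrix.add_apply, Matrix.mul_apply, Matrix.smul_apply,
    Finset.mul_sum, mul_sub, mul_comm, mul_left_comm, Finset.sum_sub_distrib]
  rw [add_sub_assoc]
  congr 2
  exact Finset.sum_congr rfl (fun x _ => by ring)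
end

section
/- Let G be a simple graph on N vertices with adjacency matrix 𝒜 and maximum degree at most d − 1 for an integer d ≥ 2. Let A be a real n×n matrix, B a real n×m matrix, K, L real m×n matrices, and τ > 0 a real number such that A + B(K − α·L) is Schur stable for every real α with |α − 1| ≤ τ. Then the matrix I_N ⊗ (A + B(K − L)) + (τ/(d−1)) · (𝒜 ⊗ (B L)) is Schur stable. -/
open Matrix
open scoped Kronecker

lemma mem_spec_iff_det {k : Type*} [Fintype k] [DecidableEq k] (X : Matrix k k ℂ) (μ : ℂ) :
    μ ∈ spectrum ℂ X ↔ (Matrix.scalar k μ - X).det = 0 := by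
  rw [spectrum.mem_iff, Matrix.isUnit_iff_isUnit_det, isUnit_iff_ne_zero, not_not]
  congr! 2

lemma adjH {N : ℕ} (G : SimpleGraph (Fin N)) [DecidableRel G.Adj] :
    (G.adjMatrix ℂ).IsHermitian := by
  ext i j
  simp [Matrix.conjTranspose_apply, SimpleGraph.adjMatrix_apply, SimpleGraph.adj_comm, apply_ite]

lemma eig_bound {N : ℕ} (G : SimpleGraph (Fin N)) [DecidableRel G.Adj]
    (hA : (G.adjMatrix ℂ).IsHermitian) (D : ℝ) (hdeg : ∀ v, (G.degree v : ℝ) ≤ D)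
    (i : Fin N) : |hA.eigenvalues i| ≤ D := by
  set v : Fin N → ℂ := ⇑(hA.eigenvectorBasis i) with hvdef
  have hv : G.adjMatrix ℂ *ᵥ v = (hA.eigenvalues i) • v := hA.mulVec_eigenvectorBasis i
  have hvne : v ≠ 0 := by
    have := hA.eigenvectorBasis.orthonormal.ne_zero i
    intro h; apply this; ext j; exact congrFun h j
  obtain ⟨k0, hk0⟩ := Function.ne_iff.mp hvne
  obtain ⟨k, -, hk⟩ := Finset.exists_max_image Finset.univ (fun j => ‖v j‖)
    ⟨k0, Finset.mem_univ k0⟩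
  have hvk : 0 < ‖v k‖ := by
    calc 0 < ‖v k0‖ := by simpa using hk0
    _ ≤ ‖v k‖ := hk k0 (Finset.mem_univ k0)
  have hmv : (G.adjMatrix ℂ *ᵥ v) k = ∑ u ∈ G.neighborFinset k, v u :=
    SimpleGraph.adjMatrix_mulVec_apply G k v
  have key : |hA.eigenvalues i| * ‖v k‖ ≤ D * ‖v k‖ := by
    have h1 : ‖(hA.eigenvalues i : ℝ) • v k‖ ≤ (G.degree k) * ‖v k‖ := by
      rw [← Pi.smul_apply, ← hv, hmv]
      calc ‖∑ u ∈ G.neighborFinset k, v u‖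
          ≤ ∑ u ∈ G.neighborFinset k, ‖v u‖ := norm_sum_le _ _
        _ ≤ ∑ u ∈ G.neighborFinset k, ‖v k‖ :=
            Finset.sum_le_sum fun u _ => hk u (Finset.mem_univ u)
        _ = (G.degree k) * ‖v k‖ := by
            rw [Finset.sum_const, SimpleGraph.card_neighborFinset_eq_degree, nsmul_eq_mul]
    have h2 : ‖(hA.eigenvalues i : ℝ) • v k‖
        = |hA.eigenvalues i| * ‖v k‖ := by
      rw [norm_smul, Real.norm_eq_abs]
    rw [h2] at h1
    exact h1.trans (by gcongr; exact hdeg k)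
  exact le_of_mul_le_mul_right key hvk

lemma det_block {n N : ℕ} (C D : Matrix (Fin n) (Fin n) ℂ) (U : Matrix (Fin N) (Fin N) ℂ)
    (hU1 : star U * U = 1)
    (lam : Fin N → ℝ) (Ac : Matrix (Fin N) (Fin N) ℂ)
    (hsp : Ac = U * diagonal (fun i => (lam i : ℂ)) * star U) (c : ℝ) (μ : ℂ) :
    (Matrix.scalar (Fin N × Fin n) μ
        - ((1 : Matrix (Fin N) (Fin N) ℂ) ⊗ₖ C + (c : ℂ) • (Ac ⊗ₖ D))).det
      = ∏ i, (Matrix.scalar (Fin n) μ - (C + ((c * lam i : ℝ) : ℂ) • D)).det := by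
  set Λ : Matrix (Fin N) (Fin N) ℂ := diagonal (fun i => (lam i : ℂ)) with hΛ
  set P : Matrix (Fin N × Fin n) (Fin N × Fin n) ℂ := U ⊗ₖ (1 : Matrix (Fin n) (Fin n) ℂ) with hP
  set Q : Matrix (Fin N × Fin n) (Fin N × Fin n) ℂ
    := (star U) ⊗ₖ (1 : Matrix (Fin n) (Fin n) ℂ) with hQ
  have hQP : Q * P = 1 := by
    rw [hQ, hP, ← Matrix.mul_kronecker_mul, hU1, Matrix.one_mul, Matrix.one_kronecker_one]
  have hdetQP : Q.det * P.det = 1 := by rw [← Matrix.det_mul, hQP, Matrix.det_one]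
  have key : Q * (Matrix.scalar (Fin N × Fin n) μ
        - ((1 : Matrix (Fin N) (Fin N) ℂ) ⊗ₖ C + (c : ℂ) • (Ac ⊗ₖ D))) * P
      = Matrix.scalar (Fin N × Fin n) μ
        - ((1 : Matrix (Fin N) (Fin N) ℂ) ⊗ₖ C + (c : ℂ) • (Λ ⊗ₖ D)) := by
    have h1 : Q * ((1 : Matrix (Fin N) (Fin N) ℂ) ⊗ₖ C) * P
        = (1 : Matrix (Fin N) (Fin N) ℂ) ⊗ₖ C := by
      rw [hQ, hP, ← Matrix.mul_kronecker_mul, ← Matrix.mul_kronecker_mul, Matrix.mul_one,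
        Matrix.one_mul, Matrix.mul_one, hU1]
    have h2 : Q * (Ac ⊗ₖ D) * P = Λ ⊗ₖ D := by
      rw [hQ, hP, ← Matrix.mul_kronecker_mul, ← Matrix.mul_kronecker_mul, Matrix.mul_one,
        Matrix.one_mul, hsp]
      have hX : star U * (U * Λ * star U) * U = Λ := by
        calc star U * (U * Λ * star U) * U = (star U * U) * Λ * (star U * U) := by noncomm_ring
          _ = Λ := by rw [hU1, Matrix.one_mul, Matrix.mul_one]
      rw [hX]
    have hsc : Q * (Matrix.scalar (Fin N × Fin n) μ) * P = Matrix.scalar (Fin N × Fin n) μ := by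
      rw [Matrix.scalar_apply, ← Matrix.smul_one_eq_diagonal, mul_smul_comm, smul_mul_assoc,
        Matrix.mul_one, hQP]
    rw [mul_sub, sub_mul, mul_add, add_mul, mul_smul_comm, smul_mul_assoc, hsc, h1, h2]
  have hdet1 : (Matrix.scalar (Fin N × Fin n) μ
        - ((1 : Matrix (Fin N) (Fin N) ℂ) ⊗ₖ C + (c : ℂ) • (Ac ⊗ₖ D))).det
      = (Matrix.scalar (Fin N × Fin n) μ
        - ((1 : Matrix (Fin N) (Fin N) ℂ) ⊗ₖ C + (c : ℂ) • (Λ ⊗ₖ D))).det := by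
    rw [← key, Matrix.det_mul, Matrix.det_mul, mul_right_comm, hdetQP, one_mul]
  rw [hdet1]
  have hblock : Matrix.scalar (Fin N × Fin n) μ
        - ((1 : Matrix (Fin N) (Fin N) ℂ) ⊗ₖ C + (c : ℂ) • (Λ ⊗ₖ D))
      = (Matrix.blockDiagonal
          (fun i => Matrix.scalar (Fin n) μ - (C + ((c * lam i : ℝ) : ℂ) • D))).submatrix
        (Equiv.prodComm (Fin N) (Fin n)) (Equiv.prodComm (Fin N) (Fin n)) := by
    ext ⟨i, a⟩ ⟨j, b⟩
    simp only [Matrix.sub_apply, Matrix.add_apply, Matrix.smul_apply, Matrix.kroneckerMap_apply,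
      Matrix.one_apply, Matrix.diagonal_apply, Matrix.scalar_apply, Matrix.submatrix_apply,
      Equiv.prodComm_apply, Prod.swap_prod_mk, Matrix.blockDiagonal_apply, Prod.mk.injEq,
      smul_eq_mul]
    by_cases hij : i = j
    · subst hij
      by_cases hab : a = b <;>
        simp only [hab, hΛ, Matrix.diagonal_apply_eq, if_true, if_false, eq_self_iff_true,
          true_and] <;> simp [hab] <;> push_cast <;> ring
    · simp [hij, hΛ, Matrix.diagonal_apply_ne _ hij]
  rw [hblock, Matrix.det_submatrix_equiv_self, Matrix.det_blockDiagonal]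

lemma map_add_smul {n : ℕ} (X Y : Matrix (Fin n) (Fin n) ℝ) (r : ℝ) :
    (X + r • Y).map (algebraMap ℝ ℂ) = X.map (algebraMap ℝ ℂ) + (r : ℂ) • Y.map (algebraMap ℝ ℂ) := by
  ext i j
  simp [Matrix.map_apply, Matrix.add_apply, Matrix.smul_apply, smul_eq_mul]

theorem stmt_15 {n m N : ℕ} (d : ℕ) (hd : 2 ≤ d)
    (G : SimpleGraph (Fin N)) [DecidableRel G.Adj]
    (hdeg : ∀ v, G.degree v ≤ d - 1)
    (A : Matrix (Fin n) (Fin n) ℝ) (B : Matrix (Fin n) (Fin m) ℝ)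
    (K L : Matrix (Fin m) (Fin n) ℝ)
    (τ : ℝ) (hτ : 0 < τ)
    (hstab : ∀ α : ℝ, |α - 1| ≤ τ → SchurStable (A + B * (K - α • L))) :
    SchurStable ((1 : Matrix (Fin N) (Fin N) ℝ) ⊗ₖ (A + B * (K - L))
      + (τ / ((d : ℝ) - 1)) • (G.adjMatrix ℝ ⊗ₖ (B * L))) := by
  intro μ hμ
  set c : ℝ := τ / ((d : ℝ) - 1) with hc
  have hd1 : (0 : ℝ) < (d : ℝ) - 1 := by
    have : (2 : ℝ) ≤ (d : ℝ) := by exact_mod_cast hd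
    linarith
  have hcpos : 0 < c := div_pos hτ hd1
  set Cr : Matrix (Fin n) (Fin n) ℝ := A + B * (K - L) with hCr
  set Dr : Matrix (Fin n) (Fin n) ℝ := B * L with hDr
  set C : Matrix (Fin n) (Fin n) ℂ := Cr.map (algebraMap ℝ ℂ) with hCdef
  set D : Matrix (Fin n) (Fin n) ℂ := Dr.map (algebraMap ℝ ℂ) with hDdef
  have hAH : (G.adjMatrix ℂ).IsHermitian := adjH G
  set U : Matrix (Fin N) (Fin N) ℂ := (Matrix.IsHermitian.eigenvectorUnitary hAH : Matrix (Fin N) (Fin N) ℂ) with hU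
  set lam : Fin N → ℝ := hAH.eigenvalues with hlamdef
  have hU1 : star U * U = 1 :=
    Matrix.mem_unitaryGroup_iff'.mp (Matrix.IsHermitian.eigenvectorUnitary hAH).2
  have hsp : G.adjMatrix ℂ = U * diagonal (fun i => (lam i : ℂ)) * star U :=
    hAH.spectral_theorem
  -- rewrite the mapped matrix
  have hmap : (((1 : Matrix (Fin N) (Fin N) ℝ) ⊗ₖ Cr + c • (G.adjMatrix ℝ ⊗ₖ Dr)).map
        (algebraMap ℝ ℂ))
      = (1 : Matrix (Fin N) (Fin N) ℂ) ⊗ₖ C + (c : ℂ) • (G.adjMatrix ℂ ⊗ₖ D) := by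
    ext ⟨i, a⟩ ⟨j, b⟩
    simp only [Matrix.map_apply, Matrix.add_apply, Matrix.smul_apply, Matrix.kroneckerMap_apply,
      Matrix.one_apply, SimpleGraph.adjMatrix_apply, smul_eq_mul, map_add, _root_.map_mul]
    push_cast
    split_ifs <;> simp [hCdef, hDdef, Matrix.map_apply]
  rw [hmap] at hμ
  rw [mem_spec_iff_det] at hμ
  rw [det_block C D U hU1 lam (G.adjMatrix ℂ) hsp c μ] at hμ
  obtain ⟨i, -, hi⟩ := Finset.prod_eq_zero_iff.mp hμ
  -- the block is the mapped closed-loop matrix for α = 1 - c * lam i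
  have hlam : |lam i| ≤ (d : ℝ) - 1 := by
    apply eig_bound G hAH ((d : ℝ) - 1)
    intro v
    have h := hdeg v
    have : ((d - 1 : ℕ) : ℝ) = (d : ℝ) - 1 := by
      rw [Nat.cast_sub (by omega : 1 ≤ d), Nat.cast_one]
    calc (G.degree v : ℝ) ≤ ((d - 1 : ℕ) : ℝ) := by exact_mod_cast h
      _ = (d : ℝ) - 1 := this
  set α : ℝ := 1 - c * lam i with hα
  have hαbound : |α - 1| ≤ τ := by
    have h1 : α - 1 = -(c * lam i) := by rw [hα]; ring
    rw [h1, abs_neg, abs_mul, abs_of_pos hcpos]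
    calc c * |lam i| ≤ c * ((d : ℝ) - 1) := by
          exact mul_le_mul_of_nonneg_left hlam hcpos.le
      _ = τ := by rw [hc]; field_simp
  have hblockeq : C + ((c * lam i : ℝ) : ℂ) • D
      = (A + B * (K - α • L)).map (algebraMap ℝ ℂ) := by
    have hreal : A + B * (K - α • L) = Cr + (c * lam i) • Dr := by
      rw [hCr, hDr, hα, Matrix.mul_sub, Matrix.mul_sub, Matrix.mul_smul]
      module
    rw [hreal, map_add_smul]
  have hspec : μ ∈ spectrum ℂ ((A + B * (K - α • L)).map (algebraMap ℝ ℂ)) := by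
    rw [mem_spec_iff_det, ← hblockeq]
    exact hi
  exact hstab α hαbound μ hspec
end

section
/- Let G be a simple graph on N vertices with graph Laplacian matrix 𝓛 (Laplacian = degree matrix minus adjacency matrix), let Q₁ be a symmetric positive definite real n×n matrix, and let Q₂ be a symmetric positive semidefinite real n×n matrix. Then the Nn×Nn matrix I_N ⊗ Q₁ + 𝓛 ⊗ Q₂ is positive definite. -/
open Matrix
open scoped Kronecker

lemma kron_psd {m n : ℕ} {A : Matrix (Fin m) (Fin m) ℝ} {B : Matrix (Fin n) (Fin n) ℝ}
    (hA : A.PosSemidef) (hB : B.PosSemidef) : (A ⊗ₖ B).PosSemidef := by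
  obtain ⟨A₁, rfl⟩ : ∃ A₁ : Matrix (Fin m) (Fin m) ℝ, A = A₁ᴴ * A₁ := by
    open scoped MatrixOrder in exact CStarAlgebra.nonneg_iff_eq_star_mul_self.mp hA.nonneg
  obtain ⟨B₁, rfl⟩ : ∃ B₁ : Matrix (Fin n) (Fin n) ℝ, B = B₁ᴴ * B₁ := by
    open scoped MatrixOrder in exact CStarAlgebra.nonneg_iff_eq_star_mul_self.mp hB.nonneg
  rw [Matrix.mul_kronecker_mul]
  have h : (A₁ᴴ ⊗ₖ B₁ᴴ) = (A₁ ⊗ₖ B₁)ᴴ := by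
    simp [Matrix.conjTranspose, ← Matrix.kroneckerMap_transpose]
    rfl
  rw [h]
  exact Matrix.posSemidef_conjTranspose_mul_self _

lemma one_kron_posDef {N n : ℕ} {Q : Matrix (Fin n) (Fin n) ℝ} (hQ : Q.PosDef) :
    ((1 : Matrix (Fin N) (Fin N) ℝ) ⊗ₖ Q).PosDef := by
  rw [posDef_iff_dotProduct_mulVec]
  constructor
  · have : ((1 : Matrix (Fin N) (Fin N) ℝ) ⊗ₖ Q)ᴴ = (1 : Matrix (Fin N) (Fin N) ℝ)ᴴ ⊗ₖ Qᴴ := by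
      simp [Matrix.conjTranspose, ← Matrix.kroneckerMap_transpose]; rfl
    rw [Matrix.IsHermitian, this, Matrix.conjTranspose_one, hQ.1.eq]
  · intro x hx
    have key : star x ⬝ᵥ ((1 : Matrix (Fin N) (Fin N) ℝ) ⊗ₖ Q) *ᵥ x
        = ∑ i : Fin N, star (fun a => x (i, a)) ⬝ᵥ Q *ᵥ (fun a => x (i, a)) := by
      simp only [dotProduct, mulVec, Fintype.sum_prod_type, kroneckerMap_apply, one_apply,
        ite_mul, one_mul, zero_mul, Finset.sum_ite_irrel, Finset.sum_const_zero,
        Finset.sum_ite_eq, Finset.mem_univ, if_true, Pi.star_apply, star_trivial]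
    rw [key]
    obtain ⟨⟨i₀, a₀⟩, hne⟩ := Function.ne_iff.mp hx
    have hpos : 0 < star (fun a => x (i₀, a)) ⬝ᵥ Q *ᵥ (fun a => x (i₀, a)) := by
      apply hQ.dotProduct_mulVec_pos
      intro h
      exact hne (congrFun h a₀)
    refine Finset.sum_pos' (fun i _ => hQ.posSemidef.dotProduct_mulVec_nonneg _) ⟨i₀, Finset.mem_univ _, hpos⟩

lemma posDef_add_posSemidef {ι : Type*} [Fintype ι] {A B : Matrix ι ι ℝ}
    (hA : A.PosDef) (hB : B.PosSemidef) : (A + B).PosDef := by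
  refine posDef_iff_dotProduct_mulVec.mpr ⟨hA.1.add hB.1, fun x hx => ?_⟩
  rw [add_mulVec, dotProduct_add]
  exact add_pos_of_pos_of_nonneg (hA.dotProduct_mulVec_pos hx) (hB.dotProduct_mulVec_nonneg x)

theorem stmt_16 {n N : ℕ} (G : SimpleGraph (Fin N)) [DecidableRel G.Adj]
    (Q₁ Q₂ : Matrix (Fin n) (Fin n) ℝ)
    (hQ₁ : Q₁.PosDef) (hQ₂ : Q₂.PosSemidef) :
    ((1 : Matrix (Fin N) (Fin N) ℝ) ⊗ₖ Q₁ + G.lapMatrix ℝ ⊗ₖ Q₂).PosDef := by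
  have h1 : ((1 : Matrix (Fin N) (Fin N) ℝ) ⊗ₖ Q₁).PosDef := one_kron_posDef hQ₁
  have h2 : (G.lapMatrix ℝ ⊗ₖ Q₂).PosSemidef :=
    kron_psd (G.posSemidef_lapMatrix ℝ) hQ₂
  exact posDef_add_posSemidef h1 h2
end
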